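/- arXiv:1811.06137 — 4 statements merged into one kernel-verified Lean document; each statement's English description precedes it below -/
import Mathlib

section
/- Let k ≥ 1, m ≥ max{k+4, 7}, and min{s,t} ≥ m. Then every edge-coloring of K_{s,t} using exactly m colors that contains no rainbow copy of 2P_3 (two vertex-disjoint paths on 3 vertices with all four edges of distinct colors) contains a k-connected monochromatic subgraph on at least s + t − 5 vertices. -/
open Finset SimpleGraph

/-- A graph is `k`-connected if it has more than `k` vertices and removing any
set of fewer than `k` vertices leaves it connected. -/
def KConn {V : Type*} [Fintype V] (k : ℕ) (G : SimpleGraph V) : Prop :=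
  k + 1 ≤ Fintype.card V ∧
    ∀ s : Finset V, s.card < k → (G.induce ((↑s : Set V)ᶜ)).Connected

/-- The host graph `B`, edge-colored by `c`, contains a rainbow copy of the
pattern graph `H`. -/
def RainbowCopy {W V α : Type*} (H : SimpleGraph W) (B : SimpleGraph V)
    (c : Sym2 V → α) : Prop :=
  ∃ f : W → V, Function.Injective f ∧
    (∀ a b, H.Adj a b → B.Adj (f a) (f b)) ∧
    ∀ a b a' b', H.Adj a b → H.Adj a' b' →
      c s(f a, f b) = c s(f a', f b') → s(a, b) = s(a', b')

/-- Disjoint union of two simple graphs. -/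
def disjUnion' {α β : Type*} (G : SimpleGraph α) (H : SimpleGraph β) :
    SimpleGraph (α ⊕ β) :=
  SimpleGraph.fromRel fun x y =>
    (∃ a b, x = Sum.inl a ∧ y = Sum.inl b ∧ G.Adj a b) ∨
    (∃ a b, x = Sum.inr a ∧ y = Sum.inr b ∧ H.Adj a b)

/-- The monochromatic subgraph of `Kₙ` in color `i`. -/
def monoGraph {n m : ℕ} (c : Sym2 (Fin n) → Fin m) (i : Fin m) : SimpleGraph (Fin n) :=
  SimpleGraph.fromRel fun x y => c s(x, y) = i

/-- The subgraph of `Kₙ` using the two colors `i` and `j`. -/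
def twoColorGraph {n m : ℕ} (c : Sym2 (Fin n) → Fin m) (i j : Fin m) : SimpleGraph (Fin n) :=
  SimpleGraph.fromRel fun x y => c s(x, y) = i ∨ c s(x, y) = j

/-- The coloring `c` of `Kₙ` uses all `m` colors. -/
def UsesAll {n m : ℕ} (c : Sym2 (Fin n) → Fin m) : Prop :=
  ∀ i : Fin m, ∃ x y : Fin n, x ≠ y ∧ c s(x, y) = i

/-- No rainbow triangle. -/
def GallaiColoring {n m : ℕ} (c : Sym2 (Fin n) → Fin m) : Prop :=
  ¬ ∃ u v w : Fin n, u ≠ v ∧ v ≠ w ∧ u ≠ w ∧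
    c s(u, v) ≠ c s(v, w) ∧ c s(v, w) ≠ c s(u, w) ∧ c s(u, v) ≠ c s(u, w)

/-- Monochromatic subgraph of `K_{s,t}` in color `i`. -/
def monoBiGraph {s t m : ℕ} (c : Sym2 (Fin s ⊕ Fin t) → Fin m) (i : Fin m) :
    SimpleGraph (Fin s ⊕ Fin t) :=
  SimpleGraph.fromRel fun x y =>
    (completeBipartiteGraph (Fin s) (Fin t)).Adj x y ∧ c s(x, y) = i

/-- The coloring of `K_{s,t}` uses all `m` colors. -/
def UsesAllBi {s t m : ℕ} (c : Sym2 (Fin s ⊕ Fin t) → Fin m) : Prop :=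
  ∀ i : Fin m, ∃ (u : Fin s) (v : Fin t), c s(Sum.inl u, Sum.inr v) = i

/-- Monochromatic path on `a` vertices in color `i`. -/
def HasMonoPath {n m : ℕ} (c : Sym2 (Fin n) → Fin m) (i : Fin m) (a : ℕ) : Prop :=
  ∃ f : Fin a → Fin n, Function.Injective f ∧
    ∀ (j : ℕ) (h : j + 1 < a), c s(f ⟨j, by omega⟩, f ⟨j + 1, h⟩) = i
/-- The claw `K_{1,3}` on 4 vertices with center `0`. -/
def claw : SimpleGraph (Fin 4) := SimpleGraph.fromRel fun x _ => x = 0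

/-- Two disjoint paths on 3 vertices. -/
def twoP3 : SimpleGraph (Fin 3 ⊕ Fin 3) :=
  disjUnion' (SimpleGraph.pathGraph 3) (SimpleGraph.pathGraph 3)

section Helpers
open Sum

instance : DecidableRel (SimpleGraph.pathGraph 3).Adj := fun _ _ =>
  decidable_of_iff _ SimpleGraph.pathGraph_adj.symm

instance : DecidableRel twoP3.Adj := fun x y => by
  unfold twoP3 disjUnion'
  rw [SimpleGraph.fromRel_adj]
  infer_instance

lemma twoP3_adj_sym2 : ∀ a b : Fin 3 ⊕ Fin 3, twoP3.Adj a b →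
    (s(a,b) = s(inl 0, inl 1) ∨ s(a,b) = s(inl 1, inl 2) ∨
     s(a,b) = s(inr 0, inr 1) ∨ s(a,b) = s(inr 1, inr 2)) := by decide

lemma twoP3_adj_pairs : ∀ a b : Fin 3 ⊕ Fin 3, twoP3.Adj a b →
    ((a,b) = (inl 0, inl 1) ∨ (a,b) = (inl 1, inl 0) ∨
     (a,b) = (inl 1, inl 2) ∨ (a,b) = (inl 2, inl 1) ∨
     (a,b) = (inr 0, inr 1) ∨ (a,b) = (inr 1, inr 0) ∨
     (a,b) = (inr 1, inr 2) ∨ (a,b) = (inr 2, inr 1)) := by decide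

variable {V : Type*} {α : Type*}

/-- workhorse: two disjoint P3s with 4 pairwise distinct colors give a rainbow 2P3. -/
lemma rainbow_of_two_paths (B : SimpleGraph V) (c : Sym2 V → α)
    (p q r p' q' r' : V)
    (h1 : B.Adj q p) (h2 : B.Adj q r) (h3 : B.Adj q' p') (h4 : B.Adj q' r')
    (hpr : p ≠ r) (hpr' : p' ≠ r')
    (d1 : p ≠ p') (d2 : p ≠ q') (d3 : p ≠ r')
    (d4 : q ≠ p') (d5 : q ≠ q') (d6 : q ≠ r')
    (d7 : r ≠ p') (d8 : r ≠ q') (d9 : r ≠ r')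
    (c1 : c s(p,q) ≠ c s(q,r)) (c2 : c s(p,q) ≠ c s(p',q')) (c3 : c s(p,q) ≠ c s(q',r'))
    (c4 : c s(q,r) ≠ c s(p',q')) (c5 : c s(q,r) ≠ c s(q',r'))
    (c6 : c s(p',q') ≠ c s(q',r')) :
    RainbowCopy twoP3 B c := by
  classical
  refine ⟨Sum.elim ![p,q,r] ![p',q',r'], ?_, ?_, ?_⟩
  · have hpq : p ≠ q := (B.ne_of_adj h1).symm
    have hqr : q ≠ r := B.ne_of_adj h2
    have hpq' : p' ≠ q' := (B.ne_of_adj h3).symm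
    have hqr' : q' ≠ r' := B.ne_of_adj h4
    intro a b hab
    rcases a with a | a <;> rcases b with b | b <;>
      fin_cases a <;> fin_cases b <;> simp_all <;> tauto
  · intro a b hab
    rcases twoP3_adj_pairs a b hab with h|h|h|h|h|h|h|h <;>
      (injection h with ha hb; subst ha; subst hb; simp) <;>
      first
        | exact h1.symm | exact h1 | exact h2 | exact h2.symm
        | exact h3.symm | exact h3 | exact h4 | exact h4.symm
  · intro a b a' b' hab hab' hcol
    have hm : ∀ (x y : Fin 3 ⊕ Fin 3), s(Sum.elim ![p,q,r] ![p',q',r'] x, Sum.elim ![p,q,r] ![p',q',r'] y)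
        = Sym2.map (Sum.elim ![p,q,r] ![p',q',r']) s(x,y) := fun x y => (Sym2.map_pair_eq _ _ _).symm
    rw [hm, hm] at hcol
    rcases twoP3_adj_sym2 a b hab with h|h|h|h <;>
      rcases twoP3_adj_sym2 a' b' hab' with h'|h'|h'|h' <;>
      rw [h, h'] <;> rw [h, h'] at hcol <;>
      simp only [Sym2.map_pair_eq, Sum.elim_inl, Sum.elim_inr, Matrix.cons_val_zero,
        Matrix.cons_val_one, Matrix.head_cons, Matrix.cons_val_two, Matrix.tail_cons] at hcol <;>
      first
        | rfl
        | exact absurd hcol c1 | exact absurd hcol.symm c1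
        | exact absurd hcol c2 | exact absurd hcol.symm c2
        | exact absurd hcol c3 | exact absurd hcol.symm c3
        | exact absurd hcol c4 | exact absurd hcol.symm c4
        | exact absurd hcol c5 | exact absurd hcol.symm c5
        | exact absurd hcol c6 | exact absurd hcol.symm c6

lemma kconn_aux {V : Type*} [Fintype V] [DecidableEq V] (k : ℕ) (G : SimpleGraph V) (S : Finset V)
    (hcard : k + 1 ≤ S.card)
    (h : ∀ T : Finset V, T ⊆ S → T.card < k → ∀ u w : V, u ∈ S → w ∈ S → u ∉ T → w ∉ T → u ≠ w →
      ∃ l : List V, (∀ a ∈ l, a ∈ S ∧ a ∉ T) ∧ List.Chain G.Adj u (l ++ [w])) :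
    KConn k (G.induce (↑S : Set V)) := by
  classical
  constructor
  · simpa [Fintype.card_coe] using hcard
  · intro T hT
    set T' : Finset V := T.image Subtype.val with hT'def
    have hT'S : T' ⊆ S := by
      intro a ha
      rw [hT'def, mem_image] at ha
      obtain ⟨x, _, rfl⟩ := ha
      exact mem_coe.mp x.2
    have hT'card : T'.card < k := lt_of_le_of_lt card_image_le hT
    have hmemT' : ∀ (a : V) (ha : a ∈ (↑S : Set V)), a ∉ T' → (⟨a, ha⟩ : ↥(↑S : Set V)) ∈ ((↑T : Set ↥(↑S : Set V))ᶜ) := by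
      intro a ha h2
      simp only [Set.mem_compl_iff, mem_coe]
      intro hmem
      exact h2 (mem_image.mpr ⟨⟨a, ha⟩, hmem, rfl⟩)
    have hmemT'2 : ∀ (x : ↥(↑S : Set V)), x ∈ ((↑T : Set ↥(↑S : Set V))ᶜ) → (x : V) ∉ T' := by
      intro x hx hmem
      rw [hT'def, mem_image] at hmem
      obtain ⟨y, hy, hxy⟩ := hmem
      exact hx (Subtype.ext hxy ▸ hy)
    rw [connected_iff]
    constructor
    · -- preconnected
      have key : ∀ (l : List V) (w : V) (hwS : w ∈ (↑S : Set V)) (hwT : w ∉ T')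
          (u : V) (huS : u ∈ (↑S : Set V)) (huT : u ∉ T'),
          (∀ a ∈ l, a ∈ S ∧ a ∉ T') → List.Chain G.Adj u (l ++ [w]) →
          ((G.induce (↑S : Set V)).induce ((↑T : Set ↥(↑S : Set V))ᶜ)).Reachable
            ⟨⟨u, huS⟩, hmemT' u huS huT⟩ ⟨⟨w, hwS⟩, hmemT' w hwS hwT⟩ := by
        intro l
        induction l with
        | nil =>
          intro w hwS hwT u huS huT _ hchain
          simp only [List.nil_append, List.chain_cons] at hchain
          exact SimpleGraph.Adj.reachable (by simpa using (List.isChain_cons_cons.1 hchain).1)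
        | cons a l ih =>
          intro w hwS hwT u huS huT hl hchain
          simp only [List.cons_append, List.chain_cons] at hchain
          have haS : a ∈ S := (hl a (by simp)).1
          have haT : a ∉ T' := (hl a (by simp)).2
          have step : ((G.induce (↑S : Set V)).induce ((↑T : Set ↥(↑S : Set V))ᶜ)).Adj
              ⟨⟨u, huS⟩, hmemT' u huS huT⟩ ⟨⟨a, mem_coe.mpr haS⟩, hmemT' a _ haT⟩ := by
            simpa using (List.isChain_cons_cons.1 hchain).1
          exact step.reachable.trans (ih w hwS hwT a (mem_coe.mpr haS) haT
            (fun b hb => hl b (by simp [hb])) (List.isChain_cons_cons.1 hchain).2)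
      rintro ⟨⟨u, huS⟩, huT⟩ ⟨⟨w, hwS⟩, hwT⟩
      by_cases heq : u = w
      · subst heq; rfl
      · obtain ⟨l, hl, hchain⟩ := h T' hT'S hT'card u w (mem_coe.mp huS) (mem_coe.mp hwS)
          (hmemT'2 _ huT) (hmemT'2 _ hwT) heq
        exact key l w hwS (hmemT'2 _ hwT) u huS (hmemT'2 _ huT) hl hchain
    · -- nonempty
      have : (S \ T').Nonempty := by
        rw [← card_pos]
        have := Finset.le_card_sdiff T' S
        omega
      obtain ⟨a, ha⟩ := this
      rw [mem_sdiff] at ha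
      exact ⟨⟨⟨a, mem_coe.mpr ha.1⟩, hmemT' a _ ha.2⟩⟩

lemma bip_adj {u w : Fin s ⊕ Fin t} :
    (completeBipartiteGraph (Fin s) (Fin t)).Adj u w ↔ u.isLeft ≠ w.isLeft := by
  rcases u with u | u <;> rcases w with w | w <;> simp

lemma monoBi_adj {c : Sym2 (Fin s ⊕ Fin t) → Fin m} {i : Fin m} {u w : Fin s ⊕ Fin t} :
    (monoBiGraph c i).Adj u w ↔
      ((completeBipartiteGraph (Fin s) (Fin t)).Adj u w ∧ c s(u, w) = i) := by
  unfold monoBiGraph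
  rw [SimpleGraph.fromRel_adj]
  constructor
  · rintro ⟨hne, h | h⟩
    · exact h
    · exact ⟨h.1.symm, by rw [Sym2.eq_swap]; exact h.2⟩
  · intro h
    exact ⟨h.1.ne, Or.inl h⟩

lemma card_left : ((univ : Finset (Fin s ⊕ Fin t)).filter (fun x => x.isLeft = true)).card = s := by
  rw [show (univ : Finset (Fin s ⊕ Fin t)).filter (fun x => x.isLeft = true)
      = (univ : Finset (Fin s)).map ⟨Sum.inl, Sum.inl_injective⟩ by
    ext x; rcases x with x | x <;> simp]
  simp

lemma card_right : ((univ : Finset (Fin s ⊕ Fin t)).filter (fun x => x.isLeft = false)).card = t := by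
  rw [show (univ : Finset (Fin s ⊕ Fin t)).filter (fun x => x.isLeft = false)
      = (univ : Finset (Fin t)).map ⟨Sum.inr, Sum.inr_injective⟩ by
    ext x; rcases x with x | x <;> simp]
  simp

lemma side_count (Q : Finset (Fin s ⊕ Fin t)) (b : Bool) (n : ℕ)
    (hn : (Q.filter (fun x => x.isLeft = b)).card + n ≤ cond b s t) :
    n ≤ ((univ \ Q).filter (fun x => x.isLeft = b)).card := by
  have hsplit : (univ \ Q).filter (fun x => x.isLeft = b)
      = (univ.filter (fun x => x.isLeft = b)) \ (Q.filter (fun x => x.isLeft = b)) := by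
    ext x; simp only [mem_filter, mem_sdiff, mem_univ, true_and]; tauto
  rw [hsplit]
  have h2 := Finset.le_card_sdiff (Q.filter (fun x => x.isLeft = b))
    (univ.filter (fun x => x.isLeft = b))
  rcases b
  · rw [card_right] at h2; rw [Bool.cond_false] at hn; omega
  · rw [card_left] at h2; rw [Bool.cond_true] at hn; omega

lemma kconnBip (k : ℕ) (hk : 1 ≤ k) (c : Sym2 (Fin s ⊕ Fin t) → Fin m) (i : Fin m)
    (S : Finset (Fin s ⊕ Fin t))
    (hmono : ∀ p q, p ∈ S → q ∈ S → (completeBipartiteGraph (Fin s) (Fin t)).Adj p q →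
      c s(p, q) = i)
    (hL : k ≤ (S.filter (fun x => x.isLeft = true)).card)
    (hR : k ≤ (S.filter (fun x => x.isLeft = false)).card) :
    KConn k ((monoBiGraph c i).induce (↑S : Set (Fin s ⊕ Fin t))) := by
  classical
  apply kconn_aux
  · have hdisj : Disjoint (S.filter (fun x => x.isLeft = true))
        (S.filter (fun x => x.isLeft = false)) := by
      rw [Finset.disjoint_left]
      intro a h1 h2
      rw [mem_filter] at h1 h2
      rw [h1.2] at h2
      exact absurd h2.2 (by simp)
    have hsub : (S.filter (fun x => x.isLeft = true)) ∪ (S.filter (fun x => x.isLeft = false)) ⊆ S :=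
      Finset.union_subset (Finset.filter_subset _ _) (Finset.filter_subset _ _)
    have hcard2 := Finset.card_le_card hsub
    rw [Finset.card_union_of_disjoint hdisj] at hcard2
    omega
  · intro T hTS hTk u w hu hw hut hwt hne
    by_cases hadj : (completeBipartiteGraph (Fin s) (Fin t)).Adj u w
    · exact ⟨[], by simp, List.Chain.cons (monoBi_adj.mpr ⟨hadj, hmono u w hu hw hadj⟩)
        List.Chain.nil⟩
    · have hside : u.isLeft = w.isLeft := by
        by_contra hh
        exact hadj (bip_adj.mpr hh)
      have hzex : ((S.filter (fun x => x.isLeft = !u.isLeft)) \ T).Nonempty := by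
        rw [← card_pos]
        have h1 := Finset.le_card_sdiff T (S.filter (fun x => x.isLeft = !u.isLeft))
        have h2 : k ≤ (S.filter (fun x => x.isLeft = !u.isLeft)).card := by
          rcases hb : u.isLeft
          · simpa [hb] using hL
          · simpa [hb] using hR
        omega
      obtain ⟨z, hz⟩ := hzex
      rw [mem_sdiff, mem_filter] at hz
      obtain ⟨⟨hzS, hzside⟩, hzT⟩ := hz
      have hzu : (completeBipartiteGraph (Fin s) (Fin t)).Adj u z := by
        rw [bip_adj, hzside]
        cases u <;> simp
      have hzw : (completeBipartiteGraph (Fin s) (Fin t)).Adj z w := by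
        rw [bip_adj, hzside, ← hside]
        cases u <;> simp
      refine ⟨[z], by simp [hzS, hzT], ?_⟩
      exact List.Chain.cons (monoBi_adj.mpr ⟨hzu, hmono u z hu hzS hzu⟩)
        (List.Chain.cons (monoBi_adj.mpr ⟨hzw, hmono z w hzS hw hzw⟩) List.Chain.nil)

lemma mem2 {β : Type*} [DecidableEq β] {F : Finset β} {a b x : β} (h2 : F.card ≤ 2)
    (ha : a ∈ F) (hb : b ∈ F) (hab : a ≠ b) (hx : x ∈ F) : x = a ∨ x = b := by
  have hsub : ({a, b} : Finset β) ⊆ F := by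
    intro y hy
    rcases Finset.mem_insert.mp hy with rfl | hy
    · exact ha
    · rw [Finset.mem_singleton] at hy; subst hy; exact hb
  have hcard : ({a, b} : Finset β).card = 2 := Finset.card_pair hab
  have : F ⊆ ({a, b} : Finset β) := by
    apply Finset.subset_iff.mpr
    intro y hy
    by_contra hny
    have : insert y ({a, b} : Finset β) ⊆ F := by
      intro z hz
      rcases Finset.mem_insert.mp hz with rfl | hz
      · exact hy
      · exact hsub hz
    have h3 : (insert y ({a, b} : Finset β)).card = 3 := by
      rw [Finset.card_insert_of_notMem hny, hcard]
    have := Finset.card_le_card this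
    omega
  have := this hx
  simp only [Finset.mem_insert, Finset.mem_singleton] at this
  exact this

lemma common_color {m : ℕ} (hm : 7 ≤ m) {ι κ : Type*} [Nonempty ι] [Nonempty κ]
    (F : ι → Finset (Fin m)) (G : κ → Finset (Fin m))
    (hF : ∀ i, (F i).card ≤ 2) (hG : ∀ j, (G j).card ≤ 2)
    (e : ι → κ → Fin m) (heF : ∀ i j, e i j ∈ F i) (heG : ∀ i j, e i j ∈ G j)
    (hsurj : ∀ g : Fin m, ∃ i j, e i j = g) :
    ∃ p, ∀ j, p ∈ G j := by
  classical
  -- N1 : any two G-sets intersect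
  have hm' : (univ : Finset (Fin m)).card = m := by simp
  have hbig : ∀ (D : Finset (Fin m)), D.card ≤ 4 → ¬ (∀ g : Fin m, g ∈ D) := by
    intro D hD hall
    have : (univ : Finset (Fin m)) ⊆ D := fun g _ => hall g
    have := Finset.card_le_card this
    omega
  have N1 : ∀ j1 j2 : κ, ∃ g, g ∈ G j1 ∧ g ∈ G j2 := by
    intro j1 j2
    by_contra hno
    push_neg at hno
    apply hbig (G j1 ∪ G j2)
    · calc (G j1 ∪ G j2).card ≤ (G j1).card + (G j2).card := Finset.card_union_le _ _
        _ ≤ 4 := by have := hG j1; have := hG j2; omega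
    · intro g
      obtain ⟨i, j, rfl⟩ := hsurj g
      have h1 : e i j1 ∈ F i := heF i j1
      have h2 : e i j2 ∈ F i := heF i j2
      have hne : e i j1 ≠ e i j2 := by
        intro heq
        exact hno _ (heG i j1) (heq ▸ heG i j2)
      rcases mem2 (hF i) h1 h2 hne (heF i j) with h | h
      · exact Finset.mem_union_left _ (h ▸ heG i j1)
      · exact Finset.mem_union_right _ (h ▸ heG i j2)
  by_contra hno
  push_neg at hno
  obtain ⟨j0⟩ := ‹Nonempty κ›
  obtain ⟨i0⟩ := ‹Nonempty ι›
  -- A := G j0 has an element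
  have hAne : (G j0).Nonempty := ⟨e i0 j0, heG i0 j0⟩
  obtain ⟨g1, hg1, hg2⟩ := N1 j0 j0  -- silly; just to get an element; use hAne instead
  -- get p α with G j0 ⊆ {p, α}
  obtain ⟨p, hp⟩ := hAne
  by_cases hsing : ∀ x ∈ G j0, x = p
  · -- G j0 = {p}; p in every G j
    obtain ⟨j1, hj1⟩ := hno p
    obtain ⟨g, hgA, hgB⟩ := N1 j0 j1
    rw [hsing g hgA] at hgB
    exact hj1 hgB
  push_neg at hsing
  obtain ⟨α, hαA, hαp⟩ := hsing
  obtain ⟨j1, hj1⟩ := hno p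
  obtain ⟨j2, hj2⟩ := hno α
  have hαj1 : α ∈ G j1 := by
    obtain ⟨g, hgA, hgB⟩ := N1 j0 j1
    rcases mem2 (hG j0) hp hαA (Ne.symm hαp) hgA with rfl | rfl
    · exact absurd hgB hj1
    · exact hgB
  have hpj2 : p ∈ G j2 := by
    obtain ⟨g, hgA, hgB⟩ := N1 j0 j2
    rcases mem2 (hG j0) hp hαA (Ne.symm hαp) hgA with rfl | rfl
    · exact hgB
    · exact absurd hgB hj2
  obtain ⟨β, hβ1, hβ2⟩ := N1 j1 j2
  have hβp : β ≠ p := fun h => hj1 (h ▸ hβ1)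
  have hβα : β ≠ α := fun h => hj2 (h ▸ hβ2)
  apply hbig {p, α, β}
  · apply le_trans (Finset.card_insert_le _ _)
    have := Finset.card_insert_le α ({β} : Finset (Fin m))
    simp only [Finset.card_singleton] at this ⊢
    omega
  · intro g
    obtain ⟨i, j, rfl⟩ := hsurj g
    have h0 : e i j0 ∈ F i := heF i j0
    have h1 : e i j1 ∈ F i := heF i j1
    have h2 : e i j2 ∈ F i := heF i j2
    have m0 : e i j0 = p ∨ e i j0 = α := mem2 (hG j0) hp hαA (Ne.symm hαp) (heG i j0)
    have m1 : e i j1 = α ∨ e i j1 = β := mem2 (hG j1) hαj1 hβ1 (fun h => hβα h.symm) (heG i j1)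
    have m2 : e i j2 = p ∨ e i j2 = β := mem2 (hG j2) hpj2 hβ2 (fun h => hβp h.symm) (heG i j2)
    simp only [Finset.mem_insert, Finset.mem_singleton]
    rcases m0 with hm0 | hm0
    · rcases m1 with hm1 | hm1
      · -- p, α ∈ F i distinct
        rcases mem2 (hF i) h0 h1 (by rw [hm0, hm1]; exact fun h => hαp h.symm) (heF i j) with h | h
        · exact Or.inl (h.trans hm0)
        · exact Or.inr (Or.inl (h.trans hm1))
      · rcases mem2 (hF i) h0 h1 (by rw [hm0, hm1]; exact fun h => hβp h.symm) (heF i j) with h | h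
        · exact Or.inl (h.trans hm0)
        · exact Or.inr (Or.inr (h.trans hm1))
    · rcases m2 with hm2 | hm2
      · rcases mem2 (hF i) h0 h2 (by rw [hm0, hm2]; exact hαp) (heF i j) with h | h
        · exact Or.inr (Or.inl (h.trans hm0))
        · exact Or.inl (h.trans hm2)
      · rcases mem2 (hF i) h0 h2 (by rw [hm0, hm2]; exact fun h => hβα h.symm) (heF i j) with h | h
        · exact Or.inr (Or.inl (h.trans hm0))
        · exact Or.inr (Or.inr (h.trans hm2))

instance {s t : ℕ} : DecidableRel (completeBipartiteGraph (Fin s) (Fin t)).Adj := fun _ _ =>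
  decidable_of_iff _ bip_adj.symm

/-- helper: picking a color whose witness vertex survives -/
lemma pick_color {k m : ℕ} {V : Type*} [DecidableEq V] (hm1 : k + 4 ≤ m) (i : Fin m)
    (wv : Fin m → V) (hinj : ∀ g g', g ≠ i → g' ≠ i → wv g = wv g' → g = g')
    (T : Finset V) (hTk : T.card < k) (av : Finset (Fin m)) (hav : av.card ≤ 2) :
    ∃ g, g ≠ i ∧ g ∉ av ∧ wv g ∉ T := by
  classical
  set E : Finset (Fin m) := (univ.erase i) \ av with hE
  set D : Finset (Fin m) := E.filter (fun g => wv g ∈ T) with hD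
  have hEne : ∀ g ∈ E, g ≠ i := by
    intro g hg
    rw [hE, mem_sdiff, Finset.mem_erase] at hg
    exact hg.1.1
  have hDcard : D.card ≤ T.card := by
    apply Finset.card_le_card_of_injOn wv
    · intro g hg
      rw [Finset.mem_coe, hD, mem_filter] at hg
      exact hg.2
    · intro g hg g' hg' heq
      rw [Finset.mem_coe, hD, mem_filter] at hg hg'
      exact hinj g g' (hEne g hg.1) (hEne g' hg'.1) heq
  have hEcard : m - 3 ≤ E.card := by
    rw [hE]
    have h1 := Finset.le_card_sdiff av (univ.erase i)
    have h2 : (univ.erase i).card = m - 1 := by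
      rw [Finset.card_erase_of_mem (mem_univ i)]
      simp
    omega
  have hne : (E \ D).Nonempty := by
    rw [← card_pos]
    have := Finset.le_card_sdiff D E
    omega
  obtain ⟨g, hg⟩ := hne
  rw [mem_sdiff] at hg
  have hgE := hg.1
  have hgD := hg.2
  have hgav : g ∉ av := by
    rw [hE, mem_sdiff] at hgE
    exact hgE.2
  refine ⟨g, hEne g hg.1, hgav, ?_⟩
  intro hgT
  exact hgD (by rw [hD, mem_filter]; exact ⟨hgE, hgT⟩)

lemma case_noclaw {k m s t : ℕ} (hk : 1 ≤ k) (hm1 : k + 4 ≤ m) (hm2 : 7 ≤ m)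
    (hs : m ≤ s) (ht : m ≤ t)
    (c : Sym2 (Fin s ⊕ Fin t) → Fin m) (hall : UsesAllBi c)
    (hclaw : ∀ v z1 z2 z3 : Fin s ⊕ Fin t,
      (completeBipartiteGraph (Fin s) (Fin t)).Adj v z1 →
      (completeBipartiteGraph (Fin s) (Fin t)).Adj v z2 →
      (completeBipartiteGraph (Fin s) (Fin t)).Adj v z3 →
      c s(v,z1) ≠ c s(v,z2) → c s(v,z1) ≠ c s(v,z3) → c s(v,z2) ≠ c s(v,z3) → False) :
    ∃ i : Fin m, KConn k
      ((monoBiGraph c i).induce ((↑(univ : Finset (Fin s ⊕ Fin t))) : Set (Fin s ⊕ Fin t))) := by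
  classical
  have hs0 : 0 < s := by omega
  have ht0 : 0 < t := by omega
  haveI : Nonempty (Fin s) := ⟨⟨0, hs0⟩⟩
  haveI : Nonempty (Fin t) := ⟨⟨0, ht0⟩⟩
  set B := completeBipartiteGraph (Fin s) (Fin t) with hB
  set Cv : (Fin s ⊕ Fin t) → Finset (Fin m) :=
    fun v => (univ.filter (fun z => B.Adj v z)).image (fun z => c s(v, z)) with hCv
  have hmemC : ∀ v z, B.Adj v z → c s(v, z) ∈ Cv v := by
    intro v z h
    rw [hCv]
    exact Finset.mem_image.mpr ⟨z, mem_filter.mpr ⟨mem_univ _, h⟩, rfl⟩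
  have hmemC' : ∀ v z, B.Adj v z → c s(v, z) ∈ Cv z := by
    intro v z h
    rw [Sym2.eq_swap]
    exact hmemC z v h.symm
  have hCv2 : ∀ v, (Cv v).card ≤ 2 := by
    intro v
    by_contra hc
    push_neg at hc
    obtain ⟨a, b, d, ha, hb, hd, hab, had, hbd⟩ := Finset.two_lt_card_iff.mp hc
    rw [hCv, Finset.mem_image] at ha hb hd
    obtain ⟨z1, hz1, rfl⟩ := ha
    obtain ⟨z2, hz2, rfl⟩ := hb
    obtain ⟨z3, hz3, rfl⟩ := hd
    exact hclaw v z1 z2 z3 (mem_filter.mp hz1).2 (mem_filter.mp hz2).2 (mem_filter.mp hz3).2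
      hab had hbd
  have hadjLR : ∀ (x : Fin s) (y : Fin t), B.Adj (inl x) (inr y) := by
    intro x y
    rw [hB, bip_adj]
    simp
  -- common color on the right side
  obtain ⟨p, hp⟩ := common_color hm2 (fun x : Fin s => Cv (inl x)) (fun y : Fin t => Cv (inr y))
    (fun x => hCv2 _) (fun y => hCv2 _) (fun x y => c s(inl x, inr y))
    (fun x y => hmemC _ _ (hadjLR x y)) (fun x y => hmemC' _ _ (hadjLR x y))
    (fun g => by obtain ⟨u, v, h⟩ := hall g; exact ⟨u, v, h⟩)
  -- common color on the left side
  obtain ⟨q, hq⟩ := common_color hm2 (fun y : Fin t => Cv (inr y)) (fun x : Fin s => Cv (inl x))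
    (fun y => hCv2 _) (fun x => hCv2 _) (fun y x => c s(inl x, inr y))
    (fun y x => hmemC' _ _ (hadjLR x y)) (fun y x => hmemC _ _ (hadjLR x y))
    (fun g => by obtain ⟨u, v, h⟩ := hall g; exact ⟨v, u, h⟩)
  -- p = q
  have hpq : p = q := by
    by_contra hne
    have h5 : 2 ≤ ((univ : Finset (Fin m)) \ {p, q}).card := by
      have h1 := Finset.le_card_sdiff ({p, q} : Finset (Fin m)) univ
      have h2 : ({p, q} : Finset (Fin m)).card ≤ 2 := Finset.card_insert_le _ _ |>.trans (by simp)
      have : (univ : Finset (Fin m)).card = m := by simp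
      omega
    obtain ⟨g1, hg1, g2, hg2, hg12⟩ := Finset.one_lt_card.mp (by omega : 1 < ((univ : Finset (Fin m)) \ {p, q}).card)
    rw [mem_sdiff, Finset.mem_insert, Finset.mem_singleton] at hg1 hg2
    push_neg at hg1 hg2
    obtain ⟨u1, v1, hc1⟩ := hall g1
    obtain ⟨u2, v2, hc2⟩ := hall g2
    -- Cv (inl u1) = {q, g1}, Cv (inr v2) = {p, g2}
    have hq1 : q ∈ Cv (inl u1) := hq u1
    have hg1m : g1 ∈ Cv (inl u1) := hc1 ▸ hmemC _ _ (hadjLR u1 v1)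
    have hp2 : p ∈ Cv (inr v2) := hp v2
    have hg2m : g2 ∈ Cv (inr v2) := hc2 ▸ hmemC' _ _ (hadjLR u2 v2)
    have hx : c s(inl u1, inr v2) ∈ Cv (inl u1) := hmemC _ _ (hadjLR u1 v2)
    have hy : c s(inl u1, inr v2) ∈ Cv (inr v2) := hmemC' _ _ (hadjLR u1 v2)
    rcases mem2 (hCv2 _) hq1 hg1m (fun h => hg1.2.2 h.symm) hx with h | h <;>
      rcases mem2 (hCv2 _) hp2 hg2m (fun h => hg2.2.1 h.symm) hy with h' | h'
    · exact hne (h'.symm.trans h)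
    · exact hg2.2.2 (h'.symm.trans h)
    · exact hg1.2.1 (h.symm.trans h')
    · exact hg12 (h.symm.trans h')
  have hci' : ∀ u, p ∈ Cv u := by
    intro u
    rcases u with x | y
    · rw [hpq]; exact hq x
    · exact hp y
  set i := p with hidef
  have hci : ∀ u, i ∈ Cv u := hci'
  -- witnesses
  have hwit : ∀ g : Fin m, ∃ (x : Fin s) (y : Fin t), c s(inl x, inr y) = g := hall
  set xw : Fin m → Fin s := fun g => (hwit g).choose with hxw
  set yw : Fin m → Fin t := fun g => (hwit g).choose_spec.choose with hyw
  have hcw : ∀ g, c s(inl (xw g), inr (yw g)) = g := fun g => (hwit g).choose_spec.choose_spec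
  -- oth
  set oth : (Fin s ⊕ Fin t) → Fin m :=
    fun u => if h : ∃ g, g ∈ Cv u ∧ g ≠ i then h.choose else i with hoth
  have hothEq : ∀ u g, g ∈ Cv u → g ≠ i → oth u = g := by
    intro u g hg hgi
    have hex : ∃ g, g ∈ Cv u ∧ g ≠ i := ⟨g, hg, hgi⟩
    have h0 : oth u = hex.choose := by simp only [hoth]; rw [dif_pos hex]
    rw [h0]
    obtain ⟨hmem, hne⟩ := hex.choose_spec
    rcases mem2 (hCv2 u) (hci u) hg (Ne.symm hgi) hmem with h | h
    · exact absurd h hne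
    · exact h
  have hstep : ∀ u w, B.Adj u w → oth u ≠ oth w → (monoBiGraph c i).Adj u w := by
    intro u w hadj hne
    rw [monoBi_adj]
    refine ⟨hadj, ?_⟩
    by_contra hgi
    have h1 : oth u = c s(u, w) := hothEq u _ (hmemC _ _ hadj) hgi
    have h2 : oth w = c s(u, w) := hothEq w _ (hmemC' _ _ hadj) hgi
    exact hne (h1.trans h2.symm)
  have hmY : ∀ g, g ∈ Cv (inr (yw g)) := by
    intro g
    have h0 := hmemC' _ _ (hadjLR (xw g) (yw g))
    rwa [hcw g] at h0
  have hmX : ∀ g, g ∈ Cv (inl (xw g)) := by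
    intro g
    have h0 := hmemC _ _ (hadjLR (xw g) (yw g))
    rwa [hcw g] at h0
  have hothY : ∀ g, g ≠ i → oth (inr (yw g)) = g := fun g hgi => hothEq _ g (hmY g) hgi
  have hothX : ∀ g, g ≠ i → oth (inl (xw g)) = g := fun g hgi => hothEq _ g (hmX g) hgi
  have hinjY : ∀ g g', g ≠ i → g' ≠ i → (inr (yw g) : Fin s ⊕ Fin t) = inr (yw g') → g = g' := by
    intro g g' hg hg' heq
    rw [← hothY g hg, ← hothY g' hg', heq]
  have hinjX : ∀ g g', g ≠ i → g' ≠ i → (inl (xw g) : Fin s ⊕ Fin t) = inl (xw g') → g = g' := by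
    intro g g' hg hg' heq
    rw [← hothX g hg, ← hothX g' hg', heq]
  refine ⟨i, kconn_aux k _ univ ?_ ?_⟩
  · have : (univ : Finset (Fin s ⊕ Fin t)).card = s + t := by simp
    omega
  · intro T _ hTk u w _ _ huT hwT hne
    by_cases hside : u.isLeft = w.isLeft
    · -- same side : one middle vertex
      cases hul : u.isLeft with
      | false =>
        obtain ⟨g, hgi, hgav, hgT⟩ := pick_color hm1 i (fun g => (inl (xw g) : Fin s ⊕ Fin t))
          hinjX T hTk {oth u, oth w} (Finset.card_insert_le _ _ |>.trans (by simp))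
        have hadj1 : B.Adj u (inl (xw g)) := by rw [hB, bip_adj]; simp [hul]
        have hadj2 : B.Adj (inl (xw g)) w := by
          rw [hB, bip_adj]; rw [← hside]; simp [hul]
        have e1 : (monoBiGraph c i).Adj u (inl (xw g)) := by
          apply hstep _ _ hadj1
          rw [hothX g hgi]
          intro h
          exact hgav (by rw [← h]; exact Finset.mem_insert_self _ _)
        have e2 : (monoBiGraph c i).Adj (inl (xw g)) w := by
          apply hstep _ _ hadj2
          rw [hothX g hgi]
          intro h
          exact hgav (by rw [h]; exact Finset.mem_insert_of_mem (Finset.mem_singleton_self _))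
        exact ⟨[inl (xw g)], by simp [hgT], List.Chain.cons e1 (List.Chain.cons e2 List.Chain.nil)⟩
      | true =>
        obtain ⟨g, hgi, hgav, hgT⟩ := pick_color hm1 i (fun g => (inr (yw g) : Fin s ⊕ Fin t))
          hinjY T hTk {oth u, oth w} (Finset.card_insert_le _ _ |>.trans (by simp))
        have hadj1 : B.Adj u (inr (yw g)) := by rw [hB, bip_adj]; simp [hul]
        have hadj2 : B.Adj (inr (yw g)) w := by
          rw [hB, bip_adj]; rw [← hside]; simp [hul]
        have e1 : (monoBiGraph c i).Adj u (inr (yw g)) := by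
          apply hstep _ _ hadj1
          rw [hothY g hgi]
          intro h
          exact hgav (by rw [← h]; exact Finset.mem_insert_self _ _)
        have e2 : (monoBiGraph c i).Adj (inr (yw g)) w := by
          apply hstep _ _ hadj2
          rw [hothY g hgi]
          intro h
          exact hgav (by rw [h]; exact Finset.mem_insert_of_mem (Finset.mem_singleton_self _))
        exact ⟨[inr (yw g)], by simp [hgT], List.Chain.cons e1 (List.Chain.cons e2 List.Chain.nil)⟩
    · -- opposite sides
      have hadj : B.Adj u w := by rw [hB, bip_adj]; exact hside
      by_cases hcuw : c s(u, w) = i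
      · exact ⟨[], by simp, List.Chain.cons (monoBi_adj.mpr ⟨hadj, hcuw⟩) List.Chain.nil⟩
      · have hgu : oth u = c s(u, w) := hothEq u _ (hmemC _ _ hadj) hcuw
        have hgw : oth w = c s(u, w) := hothEq w _ (hmemC' _ _ hadj) hcuw
        cases hul : u.isLeft with
        | true =>
          -- u left, w right
          have hwl : w.isLeft = false := by
            cases hwl : w.isLeft
            · rfl
            · rw [hul, hwl] at hside; exact absurd rfl hside
          obtain ⟨h1, h1i, h1av, h1T⟩ := pick_color hm1 i (fun g => (inr (yw g) : Fin s ⊕ Fin t))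
            hinjY T hTk {oth u} (by simp)
          obtain ⟨h2, h2i, h2av, h2T⟩ := pick_color hm1 i (fun g => (inl (xw g) : Fin s ⊕ Fin t))
            hinjX T hTk {oth u, h1} (Finset.card_insert_le _ _ |>.trans (by simp))
          have e1 : (monoBiGraph c i).Adj u (inr (yw h1)) := by
            apply hstep _ _ (by rw [hB, bip_adj]; simp [hul])
            rw [hothY h1 h1i]
            intro h
            exact h1av (by rw [← h]; exact Finset.mem_singleton_self _)
          have e2 : (monoBiGraph c i).Adj (inr (yw h1)) (inl (xw h2)) := by
            apply hstep _ _ (by rw [hB, bip_adj]; simp)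
            rw [hothY h1 h1i, hothX h2 h2i]
            intro h
            exact h2av (by rw [h]; exact Finset.mem_insert_of_mem (Finset.mem_singleton_self _))
          have e3 : (monoBiGraph c i).Adj (inl (xw h2)) w := by
            apply hstep _ _ (by rw [hB, bip_adj]; simp [hwl])
            rw [hothX h2 h2i, hgw, ← hgu]
            intro h
            exact h2av (by rw [h]; exact Finset.mem_insert_self _ _)
          exact ⟨[inr (yw h1), inl (xw h2)], by simp [h1T, h2T],
            List.Chain.cons e1 (List.Chain.cons e2 (List.Chain.cons e3 List.Chain.nil))⟩
        | false =>
          -- u right, w left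
          have hwl : w.isLeft = true := by
            cases hwl : w.isLeft
            · rw [hul, hwl] at hside; exact absurd rfl hside
            · rfl
          obtain ⟨h1, h1i, h1av, h1T⟩ := pick_color hm1 i (fun g => (inl (xw g) : Fin s ⊕ Fin t))
            hinjX T hTk {oth u} (by simp)
          obtain ⟨h2, h2i, h2av, h2T⟩ := pick_color hm1 i (fun g => (inr (yw g) : Fin s ⊕ Fin t))
            hinjY T hTk {oth u, h1} (Finset.card_insert_le _ _ |>.trans (by simp))
          have e1 : (monoBiGraph c i).Adj u (inl (xw h1)) := by
            apply hstep _ _ (by rw [hB, bip_adj]; simp [hul])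
            rw [hothX h1 h1i]
            intro h
            exact h1av (by rw [← h]; exact Finset.mem_singleton_self _)
          have e2 : (monoBiGraph c i).Adj (inl (xw h1)) (inr (yw h2)) := by
            apply hstep _ _ (by rw [hB, bip_adj]; simp)
            rw [hothX h1 h1i, hothY h2 h2i]
            intro h
            exact h2av (by rw [h]; exact Finset.mem_insert_of_mem (Finset.mem_singleton_self _))
          have e3 : (monoBiGraph c i).Adj (inr (yw h2)) w := by
            apply hstep _ _ (by rw [hB, bip_adj]; simp [hwl])
            rw [hothY h2 h2i, hgw, ← hgu]
            intro h
            exact h2av (by rw [h]; exact Finset.mem_insert_self _ _)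
          exact ⟨[inl (xw h1), inr (yw h2)], by simp [h1T, h2T],
            List.Chain.cons e1 (List.Chain.cons e2 (List.Chain.cons e3 List.Chain.nil))⟩

lemma bool_ne {b1 b2 : Bool} (h : b1 ≠ b2) : b2 = !b1 := by
  cases b1 <;> cases b2 <;> simp_all


set_option maxHeartbeats 1000000 in
lemma case_claw {k m s t : ℕ} (hk : 1 ≤ k) (hm1 : k + 4 ≤ m) (hm2 : 7 ≤ m)
    (hs : m ≤ s) (ht : m ≤ t)
    (c : Sym2 (Fin s ⊕ Fin t) → Fin m) (hall : UsesAllBi c)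
    (hrb : ¬ RainbowCopy twoP3 (completeBipartiteGraph (Fin s) (Fin t)) c)
    (v l1 l2 l3 : Fin s ⊕ Fin t)
    (ha1 : (completeBipartiteGraph (Fin s) (Fin t)).Adj v l1)
    (ha2 : (completeBipartiteGraph (Fin s) (Fin t)).Adj v l2)
    (ha3 : (completeBipartiteGraph (Fin s) (Fin t)).Adj v l3)
    (hab : c s(v,l1) ≠ c s(v,l2)) (hac : c s(v,l1) ≠ c s(v,l3))
    (hbc : c s(v,l2) ≠ c s(v,l3)) :
    ∃ (i : Fin m) (S : Finset (Fin s ⊕ Fin t)), s + t - 5 ≤ S.card ∧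
      KConn k ((monoBiGraph c i).induce (↑S : Set (Fin s ⊕ Fin t))) := by
  classical
  set B := completeBipartiteGraph (Fin s) (Fin t) with hB
  have swp : ∀ x y : Fin s ⊕ Fin t, c s(x,y) = c s(y,x) := fun x y => by rw [Sym2.eq_swap]
  set a := c s(v,l1) with hadef
  set b := c s(v,l2) with hbdef
  set cc := c s(v,l3) with hccdef
  set Claw : Finset (Fin s ⊕ Fin t) := {v, l1, l2, l3} with hClaw
  have hmemClaw : ∀ x, x ∈ Claw ↔ (x = v ∨ x = l1 ∨ x = l2 ∨ x = l3) := by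
    intro x; simp [hClaw]
  have hvClaw : v ∈ Claw := (hmemClaw v).mpr (Or.inl rfl)
  have hl1Claw : l1 ∈ Claw := (hmemClaw l1).mpr (Or.inr (Or.inl rfl))
  have hl2Claw : l2 ∈ Claw := (hmemClaw l2).mpr (Or.inr (Or.inr (Or.inl rfl)))
  have hl3Claw : l3 ∈ Claw := (hmemClaw l3).mpr (Or.inr (Or.inr (Or.inr rfl)))
  have hl12 : l1 ≠ l2 := fun h => hab (by rw [hadef, hbdef, h])
  have hl13 : l1 ≠ l3 := fun h => hac (by rw [hadef, hccdef, h])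
  have hl23 : l2 ≠ l3 := fun h => hbc (by rw [hbdef, hccdef, h])
  have hvl1 : v ≠ l1 := ha1.ne
  have hvl2 : v ≠ l2 := ha2.ne
  have hvl3 : v ≠ l3 := ha3.ne
  have hClawCard : Claw.card ≤ 4 := by
    rw [hClaw]
    apply le_trans (Finset.card_insert_le _ _)
    have h1 : ({l1, l2, l3} : Finset (Fin s ⊕ Fin t)).card ≤ 3 := by
      apply le_trans (Finset.card_insert_le _ _)
      have : ({l2, l3} : Finset (Fin s ⊕ Fin t)).card ≤ 2 := Finset.card_insert_le _ _ |>.trans (by simp)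
      omega
    omega
  have hleafadj : ∀ u, (u = l1 ∨ u = l2 ∨ u = l3) → B.Adj v u := by
    rintro u (rfl | rfl | rfl) <;> assumption
  have hleafmem : ∀ u, (u = l1 ∨ u = l2 ∨ u = l3) → u ∈ Claw := by
    rintro u (rfl | rfl | rfl) <;> assumption
  -- pick one leaf avoiding two colors
  have pick1 : ∀ e f : Fin m, ∃ u, (u = l1 ∨ u = l2 ∨ u = l3) ∧ c s(v,u) ≠ e ∧ c s(v,u) ≠ f := by
    intro e f
    by_cases he1 : a = e ∨ a = f
    · by_cases he2 : b = e ∨ b = f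
      · refine ⟨l3, Or.inr (Or.inr rfl), ?_, ?_⟩ <;> intro hcE <;>
          rcases he1 with h | h <;> rcases he2 with h' | h' <;>
          first
            | exact hab (h.trans h'.symm)
            | exact hac (h.trans hcE.symm)
            | exact hbc (h'.trans hcE.symm)
      · push_neg at he2
        exact ⟨l2, Or.inr (Or.inl rfl), he2.1, he2.2⟩
    · push_neg at he1
      exact ⟨l1, Or.inl rfl, he1.1, he1.2⟩
  -- pick two leaves avoiding one color
  have pick2 : ∀ g : Fin m, ∃ u1 u2, (u1 = l1 ∨ u1 = l2 ∨ u1 = l3) ∧ (u2 = l1 ∨ u2 = l2 ∨ u2 = l3) ∧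
      u1 ≠ u2 ∧ c s(v,u1) ≠ c s(v,u2) ∧ c s(v,u1) ≠ g ∧ c s(v,u2) ≠ g := by
    intro g
    by_cases hga : g = a
    · exact ⟨l2, l3, Or.inr (Or.inl rfl), Or.inr (Or.inr rfl), hl23, hbc,
        fun h => hab (h.trans hga).symm, fun h => hac (h.trans hga).symm⟩
    · by_cases hgb : g = b
      · exact ⟨l1, l3, Or.inl rfl, Or.inr (Or.inr rfl), hl13, hac,
          fun h => hab (h.trans hgb), fun h => hbc (h.trans hgb).symm⟩
      · exact ⟨l1, l2, Or.inl rfl, Or.inr (Or.inl rfl), hl12, hab,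
          fun h => hga h.symm, fun h => hgb h.symm⟩
  have hleafcol : ∀ u, (u = l1 ∨ u = l2 ∨ u = l3) →
      (c s(v,u) = a ∨ c s(v,u) = b ∨ c s(v,u) = cc) := by
    rintro u (rfl | rfl | rfl)
    · exact Or.inl rfl
    · exact Or.inr (Or.inl rfl)
    · exact Or.inr (Or.inr rfl)
  have RBclaw : ∀ p q r u1 u2 : Fin s ⊕ Fin t, B.Adj q p → B.Adj q r →
      (u1 = l1 ∨ u1 = l2 ∨ u1 = l3) → (u2 = l1 ∨ u2 = l2 ∨ u2 = l3) → u1 ≠ u2 →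
      p ∉ Claw → q ∉ Claw → r ∉ Claw → p ≠ r →
      c s(q,p) ≠ c s(q,r) → c s(q,p) ≠ c s(v,u1) → c s(q,p) ≠ c s(v,u2) →
      c s(q,r) ≠ c s(v,u1) → c s(q,r) ≠ c s(v,u2) → c s(v,u1) ≠ c s(v,u2) → False := by
    intro p q r u1 u2 hqp hqr hu1 hu2 h12 hp hq hr hpr hc1 hc2 hc3 hc4 hc5 hc6
    apply hrb
    refine rainbow_of_two_paths B c p q r u1 v u2 hqp hqr (hleafadj u1 hu1) (hleafadj u2 hu2)
      hpr h12 ?_ ?_ ?_ ?_ ?_ ?_ ?_ ?_ ?_ ?_ ?_ ?_ ?_ ?_ ?_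
    · exact fun h => hp (by rw [h]; exact hleafmem u1 hu1)
    · exact fun h => hp (by rw [h]; exact hvClaw)
    · exact fun h => hp (by rw [h]; exact hleafmem u2 hu2)
    · exact fun h => hq (by rw [h]; exact hleafmem u1 hu1)
    · exact fun h => hq (by rw [h]; exact hvClaw)
    · exact fun h => hq (by rw [h]; exact hleafmem u2 hu2)
    · exact fun h => hr (by rw [h]; exact hleafmem u1 hu1)
    · exact fun h => hr (by rw [h]; exact hvClaw)
    · exact fun h => hr (by rw [h]; exact hleafmem u2 hu2)
    · rw [swp p q]; exact hc1
    · rw [swp p q, swp u1 v]; exact hc2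
    · rw [swp p q]; exact hc3
    · rw [swp u1 v]; exact hc4
    · exact hc5
    · rw [swp u1 v]; exact hc6
  -- side of leaves
  have hsideleaf : ∀ u, (u = l1 ∨ u = l2 ∨ u = l3) → u.isLeft = !v.isLeft := by
    intro u hu
    have h := hleafadj u hu
    rw [hB, bip_adj] at h
    exact bool_ne h
  -- side counts for any deleted set inside a claw plus one vertex
  have hcount : ∀ (w0 : Fin s ⊕ Fin t) (Q : Finset (Fin s ⊕ Fin t)), Q ⊆ insert w0 Claw →
      (k ≤ ((univ \ Q).filter (fun x => x.isLeft = true)).card ∧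
       k ≤ ((univ \ Q).filter (fun x => x.isLeft = false)).card) := by
    intro w0 Q hQ
    have hQv : Q.filter (fun x => x.isLeft = v.isLeft) ⊆ {v, w0} := by
      intro x hx
      rw [mem_filter] at hx
      obtain ⟨hxQ, hxside⟩ := hx
      have hxm := hQ hxQ
      rw [Finset.mem_insert, hmemClaw] at hxm
      simp only [Finset.mem_insert, Finset.mem_singleton]
      rcases hxm with h | h | h | h | h
      · exact Or.inr h
      · exact Or.inl h
      all_goals
        exfalso
        rw [hsideleaf x (by tauto)] at hxside
        exact (Bool.not_ne_self v.isLeft) hxside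
    have hQnv : Q.filter (fun x => x.isLeft = !v.isLeft) ⊆ {w0, l1, l2, l3} := by
      intro x hx
      rw [mem_filter] at hx
      obtain ⟨hxQ, hxside⟩ := hx
      have hxm := hQ hxQ
      rw [Finset.mem_insert, hmemClaw] at hxm
      simp only [Finset.mem_insert, Finset.mem_singleton]
      rcases hxm with h | h | h | h | h
      · exact Or.inl h
      · exfalso
        rw [h] at hxside
        exact (Bool.not_ne_self v.isLeft) hxside.symm
      all_goals tauto
    have hc2 : (Q.filter (fun x => x.isLeft = v.isLeft)).card ≤ 2 := by
      apply le_trans (Finset.card_le_card hQv)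
      apply le_trans (Finset.card_insert_le _ _)
      simp
    have hc4 : (Q.filter (fun x => x.isLeft = !v.isLeft)).card ≤ 4 := by
      apply le_trans (Finset.card_le_card hQnv)
      apply le_trans (Finset.card_insert_le _ _)
      have : ({l1, l2, l3} : Finset (Fin s ⊕ Fin t)).card ≤ 3 := by
        apply le_trans (Finset.card_insert_le _ _)
        have : ({l2, l3} : Finset (Fin s ⊕ Fin t)).card ≤ 2 :=
          le_trans (Finset.card_insert_le _ _) (by simp)
        omega
      omega
    cases hv0 : v.isLeft
    · rw [hv0] at hc2; rw [hv0] at hc4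
      simp only [Bool.not_false] at hc4
      constructor
      · exact side_count Q true k (by rw [Bool.cond_true]; omega)
      · exact side_count Q false k (by rw [Bool.cond_false]; omega)
    · rw [hv0] at hc2; rw [hv0] at hc4
      simp only [Bool.not_true] at hc4
      constructor
      · exact side_count Q true k (by rw [Bool.cond_true]; omega)
      · exact side_count Q false k (by rw [Bool.cond_false]; omega)
  have hcardS : ∀ (Q : Finset (Fin s ⊕ Fin t)), Q.card ≤ 5 → s + t - 5 ≤ (univ \ Q).card := by
    intro Q hQ
    have h1 := Finset.le_card_sdiff Q (univ : Finset (Fin s ⊕ Fin t))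
    have h2 : (univ : Finset (Fin s ⊕ Fin t)).card = s + t := by simp
    omega
  -- ===== case 2a : an edge outside the claw with an outside color =====
  by_cases hout : ∃ p q, B.Adj p q ∧ p ∉ Claw ∧ q ∉ Claw ∧
      c s(p,q) ≠ a ∧ c s(p,q) ≠ b ∧ c s(p,q) ≠ cc
  · obtain ⟨p0, q0, hpq0, hp0, hq0, hd1, hd2, hd3⟩ := hout
    set d := c s(p0, q0) with hddef
    have step1 : ∀ x y z : Fin s ⊕ Fin t, B.Adj x y → B.Adj x z → x ∉ Claw → y ∉ Claw → z ∉ Claw →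
        c s(x,y) ≠ a → c s(x,y) ≠ b → c s(x,y) ≠ cc → c s(x,z) = c s(x,y) := by
      intro x y z hxy hxz hx hy hz w1 w2 w3
      by_cases hyz : y = z
      · rw [hyz]
      by_cases heqc : c s(x,z) = c s(x,y)
      · exact heqc
      exfalso
      obtain ⟨u1, u2, hu1, hu2, hne12, hcc12, hc1g, hc2g⟩ := pick2 (c s(x,z))
      refine RBclaw y x z u1 u2 hxy hxz hu1 hu2 hne12 hy hx hz hyz
        (fun h => heqc h.symm) ?_ ?_ ?_ ?_ hcc12
      · rcases hleafcol u1 hu1 with h | h | h <;> rw [h] <;> assumption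
      · rcases hleafcol u2 hu2 with h | h | h <;> rw [h] <;> assumption
      · exact fun h => hc1g h.symm
      · exact fun h => hc2g h.symm
    have hp0e : ∀ u, B.Adj p0 u → u ∉ Claw → c s(p0, u) = d := by
      intro u h hu
      exact step1 p0 q0 u hpq0 h hp0 hq0 hu hd1 hd2 hd3
    have hq0e : ∀ u, B.Adj q0 u → u ∉ Claw → c s(q0, u) = d := by
      intro u h hu
      have e1 : c s(q0, p0) = d := by rw [swp q0 p0]
      have := step1 q0 p0 u hpq0.symm h hq0 hp0 hu
        (by rw [e1]; exact hd1) (by rw [e1]; exact hd2) (by rw [e1]; exact hd3)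
      rw [this, e1]
    have hmono : ∀ p q : Fin s ⊕ Fin t, p ∉ Claw → q ∉ Claw → B.Adj p q → c s(p,q) = d := by
      intro p q hp hq hpq
      by_cases h1 : p = p0
      · rw [h1]; exact hp0e q (h1 ▸ hpq) hq
      by_cases h2 : q = p0
      · rw [swp p q, h2]; exact hp0e p (h2 ▸ hpq.symm) hp
      by_cases h3 : p = q0
      · rw [h3]; exact hq0e q (h3 ▸ hpq) hq
      by_cases h4 : q = q0
      · rw [swp p q, h4]; exact hq0e p (h4 ▸ hpq.symm) hp
      have hor : B.Adj p0 p ∨ B.Adj p0 q := by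
        by_cases hss : p0.isLeft = p.isLeft
        · right
          rw [hB, bip_adj, hss]
          have := hpq
          rw [hB, bip_adj] at this
          exact this
        · left
          rw [hB, bip_adj]
          exact hss
      rcases hor with h | h
      · have hanch : c s(p, p0) = d := by rw [swp p p0]; exact hp0e p h hp
        have := step1 p p0 q h.symm hpq hp hp0 hq
          (by rw [hanch]; exact hd1) (by rw [hanch]; exact hd2) (by rw [hanch]; exact hd3)
        rw [this, hanch]
      · have hanch : c s(q, p0) = d := by rw [swp q p0]; exact hp0e q h hq
        have := step1 q p0 p h.symm hpq.symm hq hp0 hp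
          (by rw [hanch]; exact hd1) (by rw [hanch]; exact hd2) (by rw [hanch]; exact hd3)
        rw [swp p q, this, hanch]
    refine ⟨d, univ \ Claw, hcardS Claw (by omega), ?_⟩
    have hcnt := hcount v Claw (fun x hx => Finset.mem_insert_of_mem hx)
    exact kconnBip k hk c d (univ \ Claw)
      (fun p q hp hq hpq => hmono p q (by rw [mem_sdiff] at hp; exact hp.2)
        (by rw [mem_sdiff] at hq; exact hq.2) hpq) hcnt.1 hcnt.2
  · -- ===== case 2b : all edges outside the claw use colors a, b, cc =====
    push_neg at hout
    have hin : ∀ p q : Fin s ⊕ Fin t, B.Adj p q → p ∉ Claw → q ∉ Claw →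
        (c s(p,q) = a ∨ c s(p,q) = b ∨ c s(p,q) = cc) := by
      intro p q hadj hp hq
      by_contra hno
      push_neg at hno
      exact hno.2.2 (hout p q hadj hp hq hno.1 hno.2.1)
    by_cases hw : ∃ w0 : Fin s ⊕ Fin t, ∀ p q r : Fin s ⊕ Fin t, B.Adj q p → B.Adj q r →
        p ∉ insert w0 Claw → q ∉ insert w0 Claw → r ∉ insert w0 Claw → c s(q,p) = c s(q,r)
    · -- 2b-i : monochromatic after removing 5 vertices
      obtain ⟨w0, hwm⟩ := hw
      set Q := insert w0 Claw with hQdef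
      have hQcard : Q.card ≤ 5 := le_trans (Finset.card_insert_le _ _) (by omega)
      -- a base edge
      have hbaseL : ∃ x : Fin s ⊕ Fin t, x.isLeft = true ∧ x ∉ Q := by
        have h1 := side_count (s := s) (t := t) Q true 1 (by
          rw [Bool.cond_true]
          have : (Q.filter (fun x => x.isLeft = true)).card ≤ 5 :=
            le_trans (Finset.card_le_card (Finset.filter_subset _ _)) hQcard
          omega)
        have : ((univ \ Q).filter (fun x => x.isLeft = true)).Nonempty := by
          rw [← card_pos]; omega
        obtain ⟨x, hx⟩ := this
        rw [mem_filter, mem_sdiff] at hx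
        exact ⟨x, hx.2, hx.1.2⟩
      have hbaseR : ∃ y : Fin s ⊕ Fin t, y.isLeft = false ∧ y ∉ Q := by
        have h1 := side_count (s := s) (t := t) Q false 1 (by
          rw [Bool.cond_false]
          have : (Q.filter (fun x => x.isLeft = false)).card ≤ 5 :=
            le_trans (Finset.card_le_card (Finset.filter_subset _ _)) hQcard
          omega)
        have : ((univ \ Q).filter (fun x => x.isLeft = false)).Nonempty := by
          rw [← card_pos]; omega
        obtain ⟨y, hy⟩ := this
        rw [mem_filter, mem_sdiff] at hy
        exact ⟨y, hy.2, hy.1.2⟩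
      obtain ⟨x1, hx1side, hx1Q⟩ := hbaseL
      obtain ⟨y1, hy1side, hy1Q⟩ := hbaseR
      set d0 := c s(x1, y1) with hd0def
      have haux : ∀ p q : Fin s ⊕ Fin t, p ∉ Q → q ∉ Q → p.isLeft = true → q.isLeft = false →
          c s(p, q) = d0 := by
        intro p q hp hq hps hqs
        have hadjpq : B.Adj p q := by rw [hB, bip_adj, hps, hqs]; simp
        have hadjpy : B.Adj p y1 := by rw [hB, bip_adj, hps, hy1side]; simp
        have hadjyx : B.Adj y1 x1 := by rw [hB, bip_adj, hx1side, hy1side]; simp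
        have e1 : c s(p, q) = c s(p, y1) := hwm q p y1 hadjpq hadjpy hq hp hy1Q
        have e2 : c s(y1, p) = c s(y1, x1) := hwm p y1 x1 hadjpy.symm hadjyx hp hy1Q hx1Q
        rw [e1, swp p y1, e2, swp y1 x1]
      have hmono : ∀ p q : Fin s ⊕ Fin t, p ∉ Q → q ∉ Q → B.Adj p q → c s(p, q) = d0 := by
        intro p q hp hq hpq
        rw [hB, bip_adj] at hpq
        cases hps : p.isLeft
        · cases hqs : q.isLeft
          · rw [hps, hqs] at hpq; simp at hpq
          · rw [swp p q]; exact haux q p hq hp hqs hps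
        · cases hqs : q.isLeft
          · exact haux p q hp hq hps hqs
          · rw [hps, hqs] at hpq; simp at hpq
      refine ⟨d0, univ \ Q, hcardS Q hQcard, ?_⟩
      have hcnt := hcount w0 Q (by rw [hQdef])
      exact kconnBip k hk c d0 (univ \ Q)
        (fun p q hp hq hpq => hmono p q (by rw [mem_sdiff] at hp; exact hp.2)
          (by rw [mem_sdiff] at hq; exact hq.2) hpq) hcnt.1 hcnt.2
    · -- 2b-ii : contradiction
      exfalso
      push_neg at hw
      -- Claim A : no outside color at v
      have claimA : ∀ y' : Fin s ⊕ Fin t, B.Adj v y' → c s(v, y') ≠ a → c s(v, y') ≠ b →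
          c s(v, y') ≠ cc → False := by
        intro y' hvy' n1 n2 n3
        have hy'Claw : y' ∉ Claw := by
          rw [hmemClaw]
          push_neg
          exact ⟨hvy'.ne', fun h => n1 (by rw [h]), fun h => n2 (by rw [h]), fun h => n3 (by rw [h])⟩
        obtain ⟨p, q, r, h1, h2, hp, hq, hr, hne⟩ := hw y'
        rw [Finset.mem_insert] at hp hq hr
        push_neg at hp hq hr
        have hecol := hin q p h1 hq.2 hp.2
        have hfcol := hin q r h2 hq.2 hr.2
        obtain ⟨u1, hu1, hu1e, hu1f⟩ := pick1 (c s(q,p)) (c s(q,r))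
        apply hrb
        refine rainbow_of_two_paths B c p q r u1 v y' h1 h2 (hleafadj u1 hu1) hvy'
          (fun hpr => hne (by rw [hpr])) (fun h => hy'Claw (by rw [← h]; exact hleafmem u1 hu1))
          ?_ ?_ ?_ ?_ ?_ ?_ ?_ ?_ ?_ ?_ ?_ ?_ ?_ ?_ ?_
        · exact fun h => hp.2 (by rw [h]; exact hleafmem u1 hu1)
        · exact fun h => hp.2 (by rw [h]; exact hvClaw)
        · exact hp.1
        · exact fun h => hq.2 (by rw [h]; exact hleafmem u1 hu1)
        · exact fun h => hq.2 (by rw [h]; exact hvClaw)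
        · exact hq.1
        · exact fun h => hr.2 (by rw [h]; exact hleafmem u1 hu1)
        · exact fun h => hr.2 (by rw [h]; exact hvClaw)
        · exact hr.1
        · rw [swp p q]; exact hne
        · rw [swp p q, swp u1 v]; exact fun h => hu1e h.symm
        · rw [swp p q]
          rcases hecol with h | h | h <;> rw [h]
          · exact fun hh => n1 hh.symm
          · exact fun hh => n2 hh.symm
          · exact fun hh => n3 hh.symm
        · rw [swp u1 v]; exact fun h => hu1f h.symm
        · rcases hfcol with h | h | h <;> rw [h]
          · exact fun hh => n1 hh.symm
          · exact fun hh => n2 hh.symm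
          · exact fun hh => n3 hh.symm
        · rw [swp u1 v]
          rcases hleafcol u1 hu1 with h | h | h <;> rw [h]
          · exact fun hh => n1 hh.symm
          · exact fun hh => n2 hh.symm
          · exact fun hh => n3 hh.symm
      -- every outside color appears at a leaf
      have hleafedge : ∀ g : Fin m, g ≠ a → g ≠ b → g ≠ cc →
          ∃ l o : Fin s ⊕ Fin t, (l = l1 ∨ l = l2 ∨ l = l3) ∧ o ∉ Claw ∧ B.Adj l o ∧
            c s(l, o) = g := by
        intro g n1 n2 n3
        obtain ⟨u, y, hcuy⟩ := hall g
        set e1 : Fin s ⊕ Fin t := inl u with he1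
        set e2 : Fin s ⊕ Fin t := inr y with he2
        have hadj12 : B.Adj e1 e2 := by rw [hB, bip_adj, he1, he2]; simp
        have hc12 : c s(e1, e2) = g := hcuy
        have hoc : e1 ∈ Claw ∨ e2 ∈ Claw := by
          by_contra hcon
          push_neg at hcon
          rcases hin e1 e2 hadj12 hcon.1 hcon.2 with h | h | h
          · exact n1 (by rw [← hc12, h])
          · exact n2 (by rw [← hc12, h])
          · exact n3 (by rw [← hc12, h])
        have mk : ∀ f1 f2 : Fin s ⊕ Fin t, B.Adj f1 f2 → c s(f1, f2) = g →
            (f1 = l1 ∨ f1 = l2 ∨ f1 = l3) →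
            ∃ l o : Fin s ⊕ Fin t, (l = l1 ∨ l = l2 ∨ l = l3) ∧ o ∉ Claw ∧ B.Adj l o ∧
              c s(l, o) = g := by
          intro f1 f2 hadj hc hl
          refine ⟨f1, f2, hl, ?_, hadj, hc⟩
          rw [hmemClaw]
          push_neg
          have hf1side : f1.isLeft = !v.isLeft := hsideleaf f1 hl
          have hf2side : f2.isLeft = v.isLeft := by
            have hh := hadj
            rw [hB, bip_adj] at hh
            rw [bool_ne hh, hf1side, Bool.not_not]
          have hnotleaf : ∀ j : Fin s ⊕ Fin t, (j = l1 ∨ j = l2 ∨ j = l3) → f2 ≠ j := by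
            intro j hj hh
            have h1 := hsideleaf j hj
            rw [← hh, hf2side] at h1
            exact (Bool.not_ne_self v.isLeft) h1.symm
          refine ⟨?_, hnotleaf l1 (Or.inl rfl), hnotleaf l2 (Or.inr (Or.inl rfl)),
            hnotleaf l3 (Or.inr (Or.inr rfl))⟩
          intro hh
          rw [hh, swp f1 v] at hc
          rcases hleafcol f1 hl with h | h | h
          · exact n1 (hc.symm.trans h)
          · exact n2 (hc.symm.trans h)
          · exact n3 (hc.symm.trans h)
        have main : ∀ f1 f2 : Fin s ⊕ Fin t, B.Adj f1 f2 → c s(f1, f2) = g → f1 ∈ Claw →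
            ∃ l o : Fin s ⊕ Fin t, (l = l1 ∨ l = l2 ∨ l = l3) ∧ o ∉ Claw ∧ B.Adj l o ∧
              c s(l, o) = g := by
          intro f1 f2 hadj hc h1c
          rw [hmemClaw] at h1c
          rcases h1c with rfl | hl | hl | hl
          · exact absurd (claimA f2 hadj (by rw [hc]; exact n1) (by rw [hc]; exact n2)
              (by rw [hc]; exact n3)) not_false
          · exact mk f1 f2 hadj hc (Or.inl hl)
          · exact mk f1 f2 hadj hc (Or.inr (Or.inl hl))
          · exact mk f1 f2 hadj hc (Or.inr (Or.inr hl))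
        rcases hoc with h | h
        · exact main e1 e2 hadj12 hc12 h
        · exact main e2 e1 hadj12.symm (by rw [swp e2 e1]; exact hc12) h
      -- pigeonhole: two outside colors at the same leaf
      set D : Finset (Fin m) := univ \ {a, b, cc} with hDdef
      have hDcard : 4 ≤ D.card := by
        rw [hDdef]
        have h1 := Finset.le_card_sdiff ({a, b, cc} : Finset (Fin m)) univ
        have h2 : ({a, b, cc} : Finset (Fin m)).card ≤ 3 := by
          apply le_trans (Finset.card_insert_le _ _)
          have : ({b, cc} : Finset (Fin m)).card ≤ 2 :=
            le_trans (Finset.card_insert_le _ _) (by simp)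
          omega
        have h3 : (univ : Finset (Fin m)).card = m := by simp
        omega
      have hDne : ∀ g ∈ D, g ≠ a ∧ g ≠ b ∧ g ≠ cc := by
        intro g hg
        rw [hDdef, mem_sdiff] at hg
        have := hg.2
        simp only [Finset.mem_insert, Finset.mem_singleton] at this
        push_neg at this
        exact this
      set F : Fin m → Fin s ⊕ Fin t :=
        fun g => if h : g ≠ a ∧ g ≠ b ∧ g ≠ cc
          then (hleafedge g h.1 h.2.1 h.2.2).choose else v with hF
      have hFprop : ∀ g, (h : g ≠ a ∧ g ≠ b ∧ g ≠ cc) →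
          (F g = l1 ∨ F g = l2 ∨ F g = l3) ∧
          ∃ o, o ∉ Claw ∧ B.Adj (F g) o ∧ c s(F g, o) = g := by
        intro g h
        have hFg : F g = (hleafedge g h.1 h.2.1 h.2.2).choose := by
          simp only [hF]
          rw [dif_pos h]
        obtain ⟨o, hP, hQ1, hQ2, hQ3⟩ := (hleafedge g h.1 h.2.1 h.2.2).choose_spec
        rw [hFg]
        exact ⟨hP, o, hQ1, hQ2, hQ3⟩
      have hmaps : ∀ g ∈ D, F g ∈ ({l1, l2, l3} : Finset (Fin s ⊕ Fin t)) := by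
        intro g hg
        obtain ⟨hP, _⟩ := hFprop g (hDne g hg)
        simp only [Finset.mem_insert, Finset.mem_singleton]
        exact hP
      have hlt : ({l1, l2, l3} : Finset (Fin s ⊕ Fin t)).card < D.card := by
        have : ({l1, l2, l3} : Finset (Fin s ⊕ Fin t)).card ≤ 3 := by
          apply le_trans (Finset.card_insert_le _ _)
          have : ({l2, l3} : Finset (Fin s ⊕ Fin t)).card ≤ 2 :=
            le_trans (Finset.card_insert_le _ _) (by simp)
          omega
        omega
      obtain ⟨g1, hg1D, g2, hg2D, hgne, hFeq⟩ :=
        Finset.exists_ne_map_eq_of_card_lt_of_maps_to hlt hmaps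
      obtain ⟨hP1, o1, ho1c, ho1adj, ho1col⟩ := hFprop g1 (hDne g1 hg1D)
      obtain ⟨hP2, o2, ho2c, ho2adj, ho2col⟩ := hFprop g2 (hDne g2 hg2D)
      rw [← hFeq] at ho2adj ho2col
      have hoo : o1 ≠ o2 := by
        intro h
        rw [h] at ho1col
        exact hgne (ho1col.symm.trans ho2col)
      -- two other leaves
      obtain ⟨u1, u2, hu1, hu2, h12, hc12, hu1l, hu2l⟩ :
          ∃ u1 u2 : Fin s ⊕ Fin t, (u1 = l1 ∨ u1 = l2 ∨ u1 = l3) ∧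
            (u2 = l1 ∨ u2 = l2 ∨ u2 = l3) ∧ u1 ≠ u2 ∧ c s(v,u1) ≠ c s(v,u2) ∧
            u1 ≠ F g1 ∧ u2 ≠ F g1 := by
        rcases hP1 with h | h | h
        · exact ⟨l2, l3, Or.inr (Or.inl rfl), Or.inr (Or.inr rfl), hl23, hbc,
            by rw [h]; exact hl12.symm, by rw [h]; exact hl13.symm⟩
        · exact ⟨l1, l3, Or.inl rfl, Or.inr (Or.inr rfl), hl13, hac,
            by rw [h]; exact hl12, by rw [h]; exact hl23.symm⟩
        · exact ⟨l1, l2, Or.inl rfl, Or.inr (Or.inl rfl), hl12, hab,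
            by rw [h]; exact hl13, by rw [h]; exact hl23⟩
      have hlv : F g1 ≠ v := by
        rcases hP1 with h | h | h <;> rw [h]
        · exact hvl1.symm
        · exact hvl2.symm
        · exact hvl3.symm
      apply hrb
      refine rainbow_of_two_paths B c o1 (F g1) o2 u1 v u2 ho1adj ho2adj
        (hleafadj u1 hu1) (hleafadj u2 hu2) hoo h12
        ?_ ?_ ?_ ?_ ?_ ?_ ?_ ?_ ?_ ?_ ?_ ?_ ?_ ?_ ?_
      · exact fun h => ho1c (by rw [h]; exact hleafmem u1 hu1)
      · exact fun h => ho1c (by rw [h]; exact hvClaw)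
      · exact fun h => ho1c (by rw [h]; exact hleafmem u2 hu2)
      · exact fun h => hu1l h.symm
      · exact hlv
      · exact fun h => hu2l h.symm
      · exact fun h => ho2c (by rw [h]; exact hleafmem u1 hu1)
      · exact fun h => ho2c (by rw [h]; exact hvClaw)
      · exact fun h => ho2c (by rw [h]; exact hleafmem u2 hu2)
      · rw [swp o1 (F g1), ho1col, ho2col]
        exact hgne
      · rw [swp o1 (F g1), ho1col, swp u1 v]
        rcases hleafcol u1 hu1 with h | h | h <;> rw [h]
        · exact (hDne g1 hg1D).1
        · exact (hDne g1 hg1D).2.1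
        · exact (hDne g1 hg1D).2.2
      · rw [swp o1 (F g1), ho1col]
        rcases hleafcol u2 hu2 with h | h | h <;> rw [h]
        · exact (hDne g1 hg1D).1
        · exact (hDne g1 hg1D).2.1
        · exact (hDne g1 hg1D).2.2
      · rw [ho2col, swp u1 v]
        rcases hleafcol u1 hu1 with h | h | h <;> rw [h]
        · exact (hDne g2 hg2D).1
        · exact (hDne g2 hg2D).2.1
        · exact (hDne g2 hg2D).2.2
      · rw [ho2col]
        rcases hleafcol u2 hu2 with h | h | h <;> rw [h]
        · exact (hDne g2 hg2D).1
        · exact (hDne g2 hg2D).2.1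
        · exact (hDne g2 hg2D).2.2
      · rw [swp u1 v]
        exact hc12


end Helpers

/-- Rainbow-`2P₃`-free colorings of `K_{s,t}` contain a `k`-connected
monochromatic subgraph on at least `s + t − 5` vertices. -/
theorem stmt_10 (k m s t : ℕ) (hk : 1 ≤ k) (hm1 : k + 4 ≤ m) (hm2 : 7 ≤ m)
    (hs : m ≤ s) (ht : m ≤ t)
    (c : Sym2 (Fin s ⊕ Fin t) → Fin m) (hall : UsesAllBi c)
    (hrb : ¬ RainbowCopy twoP3 (completeBipartiteGraph (Fin s) (Fin t)) c) :
    ∃ (i : Fin m) (S : Finset (Fin s ⊕ Fin t)), s + t - 5 ≤ S.card ∧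
      KConn k ((monoBiGraph c i).induce (↑S : Set (Fin s ⊕ Fin t))) := by
  classical
  by_cases hclaw : ∃ v z1 z2 z3 : Fin s ⊕ Fin t,
      (completeBipartiteGraph (Fin s) (Fin t)).Adj v z1 ∧
      (completeBipartiteGraph (Fin s) (Fin t)).Adj v z2 ∧
      (completeBipartiteGraph (Fin s) (Fin t)).Adj v z3 ∧
      c s(v,z1) ≠ c s(v,z2) ∧ c s(v,z1) ≠ c s(v,z3) ∧ c s(v,z2) ≠ c s(v,z3)
  · obtain ⟨v, z1, z2, z3, h1, h2, h3, h4, h5, h6⟩ := hclaw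
    exact case_claw hk hm1 hm2 hs ht c hall hrb v z1 z2 z3 h1 h2 h3 h4 h5 h6
  · push_neg at hclaw
    obtain ⟨i, hK⟩ := case_noclaw hk hm1 hm2 hs ht c hall
      (fun v z1 z2 z3 a1 a2 a3 n1 n2 n3 => n3 (hclaw v z1 z2 z3 a1 a2 a3 n1 n2))
    refine ⟨i, Finset.univ, ?_, hK⟩
    have : (Finset.univ : Finset (Fin s ⊕ Fin t)).card = s + t := by simp
    omega
end

section
/- Let m ≥ 7 colors be used and n ≥ (m+11)(k−1) + 7k·ln k + 2m + 3 (with k ≥ 1). Then every edge-coloring of K_n using exactly m colors that contains no rainbow copy of P_3 ∪ H, for a fixed graph H, contains a connected monochromatic subgraph on at least (n − |V(H)|)/|E(H)| vertices, provided that every rainbow-H-free m-coloring of such K_n contains a connected monochromatic subgraph on more than (n − |V(H)|)/|E(H)| vertices. -/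
open Finset SimpleGraph

lemma aux_singleton_connected {V : Type*} (G : SimpleGraph V) (v : V) :
    (G.induce ({v} : Set V)).Connected := by
  rw [SimpleGraph.connected_iff]
  refine ⟨?_, ⟨⟨v, rfl⟩⟩⟩
  intro a b
  have ha : a.1 = v := a.2
  have hb : b.1 = v := b.2
  have : a = b := Subtype.ext (ha.trans hb.symm)
  rw [this]

lemma aux_star_connected {V : Type*} (G : SimpleGraph V) (u : V) (s : Set V)
    (hu : u ∈ s) (hadj : ∀ v ∈ s, v ≠ u → G.Adj u v) :
    (G.induce s).Connected := by
  rw [SimpleGraph.connected_iff]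
  refine ⟨?_, ⟨⟨u, hu⟩⟩⟩
  intro a b
  have key : ∀ x : s, (G.induce s).Reachable ⟨u, hu⟩ x := by
    intro ⟨x, hx⟩
    by_cases hxu : x = u
    · subst hxu; rfl
    · exact (SimpleGraph.Adj.reachable (by
        show G.Adj u x
        exact hadj x hx hxu : (G.induce s).Adj ⟨u, hu⟩ ⟨x, hx⟩))
  exact (key a).symm.trans (key b)

lemma aux_supp_connected {V : Type*} (G : SimpleGraph V) (C : G.ConnectedComponent) :
    (G.induce C.supp).Connected := by
  classical
  obtain ⟨u, hu⟩ := C.exists_rep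
  have hus : u ∈ C.supp := by rwa [SimpleGraph.ConnectedComponent.mem_supp_iff]
  apply SimpleGraph.induce_connected_of_patches u hus
  intro v hv
  rw [SimpleGraph.ConnectedComponent.mem_supp_iff] at hv
  have hr : G.Reachable u v := SimpleGraph.ConnectedComponent.exact (hu.trans hv.symm)
  obtain ⟨p⟩ := hr
  refine ⟨{x | x ∈ p.support}, ?_, p.start_mem_support, p.end_mem_support, ?_⟩
  · intro x hx
    rw [Set.mem_setOf_eq] at hx
    rw [SimpleGraph.ConnectedComponent.mem_supp_iff]
    exact ((SimpleGraph.ConnectedComponent.sound ⟨p.takeUntil x hx⟩).symm).trans hu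
  · exact (p.connected_induce_support).preconnected _ _

lemma aux_connected_mono {V : Type*} {G G' : SimpleGraph V} {s : Set V}
    (h : ∀ a b : V, a ∈ s → b ∈ s → G.Adj a b → G'.Adj a b)
    (hc : (G.induce s).Connected) : (G'.induce s).Connected := by
  apply hc.mono
  intro a b hab
  exact h a b a.2 b.2 hab

lemma monoGraph_adj {n m : ℕ} (c : Sym2 (Fin n) → Fin m) (i : Fin m) (x y : Fin n) :
    (monoGraph c i).Adj x y ↔ x ≠ y ∧ c s(x, y) = i := by
  unfold monoGraph
  rw [SimpleGraph.fromRel_adj]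
  constructor
  · rintro ⟨hne, h | h⟩
    · exact ⟨hne, h⟩
    · exact ⟨hne, by rwa [Sym2.eq_swap]⟩
  · rintro ⟨hne, h⟩
    exact ⟨hne, Or.inl h⟩

lemma aux_milne_sum {ι : Type*} (J : Finset ι) (a b : ι → ℝ) (q : ℝ)
    (ha : ∀ j ∈ J, 0 ≤ a j) (hb : ∀ j ∈ J, 0 ≤ b j)
    (hab : ∀ j ∈ J, a j + b j ≤ q) :
    0 ≤ ∑ j ∈ J, a j * b j ∧
    (∑ j ∈ J, a j * b j) ≤ q * (∑ j ∈ J, a j) ∧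
    (∑ j ∈ J, a j * b j) * ((∑ j ∈ J, a j) + (∑ j ∈ J, b j)) ≤
      q * (∑ j ∈ J, a j) * (∑ j ∈ J, b j) := by
  classical
  induction J using Finset.cons_induction with
  | empty => simp
  | cons j J hj ih =>
    have haj : 0 ≤ a j := ha j (mem_cons_self j J)
    have hbj : 0 ≤ b j := hb j (mem_cons_self j J)
    have habj : a j + b j ≤ q := hab j (mem_cons_self j J)
    have hq : 0 ≤ q := le_trans (by positivity) habj
    obtain ⟨ih0, ih1, ih2⟩ := ih (fun x hx => ha x (mem_cons.2 (Or.inr hx)))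
      (fun x hx => hb x (mem_cons.2 (Or.inr hx)))
      (fun x hx => hab x (mem_cons.2 (Or.inr hx)))
    set P := ∑ x ∈ J, a x * b x with hP
    set S := ∑ x ∈ J, a x with hS
    set T := ∑ x ∈ J, b x with hT
    have hS0 : 0 ≤ S := Finset.sum_nonneg (fun x hx => ha x (mem_cons.2 (Or.inr hx)))
    have hT0 : 0 ≤ T := Finset.sum_nonneg (fun x hx => hb x (mem_cons.2 (Or.inr hx)))
    rw [Finset.sum_cons, Finset.sum_cons, Finset.sum_cons, ← hP, ← hS, ← hT]
    refine ⟨by positivity, ?_, ?_⟩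
    · nlinarith [mul_le_mul_of_nonneg_left habj haj]
    · rcases eq_or_lt_of_le (add_nonneg hS0 hT0) with hST | hST
      · have hSz : S = 0 := by linarith [hS0, hT0]
        have hTz : T = 0 := by linarith [hS0, hT0]
        have hPz : P = 0 := le_antisymm (by rw [hSz] at ih1; linarith) ih0
        rw [hSz, hTz, hPz]
        nlinarith [mul_nonneg haj hbj]
      · rw [← mul_le_mul_iff_of_pos_right hST]
        have h1 : (P * (S + T)) * (S + T) ≤ (q * S * T) * (S + T) :=
          mul_le_mul_of_nonneg_right ih2 hST.le
        have h2 : (P * (S + T)) * (a j + b j) ≤ (q * S * T) * (a j + b j) :=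
          mul_le_mul_of_nonneg_right ih2 (add_nonneg haj hbj)
        have h3 : (a j + b j) * (a j * b j * (S + T)) ≤ q * (a j * b j * (S + T)) :=
          mul_le_mul_of_nonneg_right habj (by positivity)
        have h4 : (a j + b j) * (S^2 * b j + a j * T^2) ≤ q * (S^2 * b j + a j * T^2) :=
          mul_le_mul_of_nonneg_right habj (by positivity)
        nlinarith [h1, h2, h3, h4, sq_nonneg (b j * S - a j * T),
          mul_nonneg (mul_nonneg haj hbj) (sq_nonneg (S - T))]

set_option maxHeartbeats 1000000 in
lemma aux_LMP {n m : ℕ} (c : Sym2 (Fin n) → Fin m) (U W : Finset (Fin n))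
    (Cs : Finset (Fin m)) (hUW : Disjoint U W) (hU : U.Nonempty) (hW : W.Nonempty)
    (hcross : ∀ u ∈ U, ∀ w ∈ W, c s(u, w) ∈ Cs) :
    ∃ i, ∃ S : Finset (Fin n),
      U.card + W.card ≤ Cs.card * S.card ∧
      ((monoGraph c i).induce (↑S : Set (Fin n))).Connected := by
  classical
  set G : Fin m → SimpleGraph (Fin n) :=
    fun i => SimpleGraph.fromRel (fun x y => x ∈ U ∧ y ∈ W ∧ c s(x, y) = i) with hG
  have hGle : ∀ i, ∀ a b : Fin n, (G i).Adj a b → (monoGraph c i).Adj a b := by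
    intro i a b hab
    rw [hG] at hab
    rw [SimpleGraph.fromRel_adj] at hab
    rw [monoGraph_adj]
    obtain ⟨hne, h | h⟩ := hab
    · exact ⟨hne, h.2.2⟩
    · exact ⟨hne, by rw [Sym2.eq_swap]; exact h.2.2⟩
  set suppF : Fin m → Fin n → Finset (Fin n) :=
    fun i v => (Set.toFinite ((G i).connectedComponentMk v).supp).toFinset with hsuppF
  have key : ∃ i, ∃ v, U.card + W.card ≤ Cs.card * (suppF i v).card := by
    by_contra hcon
    push_neg at hcon
    set s := U.card with hs
    set t := W.card with ht
    have hm' : 0 < Cs.card := by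
      obtain ⟨u, hu⟩ := hU
      obtain ⟨w, hw⟩ := hW
      exact Finset.card_pos.2 ⟨_, hcross u hu w hw⟩
    have hs1 : 1 ≤ s := Finset.card_pos.2 hU
    have ht1 : 1 ≤ t := Finset.card_pos.2 hW
    set Q : ℝ := (s : ℝ) + t - 1 with hQ
    set q : ℝ := Q / Cs.card with hq
    have hs1' : (1:ℝ) ≤ (s:ℝ) := by exact_mod_cast hs1
    have ht1' : (1:ℝ) ≤ (t:ℝ) := by exact_mod_cast ht1
    have hQ0 : 0 ≤ Q := by rw [hQ]; linarith
    have hq0 : 0 ≤ q := div_nonneg hQ0 (Nat.cast_nonneg _)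
    have stepA : ∀ u ∈ U, t ≤ ∑ i ∈ Cs,
        (W.filter (fun w => (G i).connectedComponentMk w = (G i).connectedComponentMk u)).card := by
      intro u hu
      have hsub : W ⊆ Cs.biUnion (fun i =>
          W.filter (fun w => (G i).connectedComponentMk w = (G i).connectedComponentMk u)) := by
        intro w hw
        rw [Finset.mem_biUnion]
        refine ⟨c s(u, w), hcross u hu w hw, ?_⟩
        rw [Finset.mem_filter]
        refine ⟨hw, ?_⟩
        have hadj : (G (c s(u, w))).Adj u w := by
          rw [hG]
          rw [SimpleGraph.fromRel_adj]
          exact ⟨fun h => (Finset.disjoint_left.1 hUW hu) (h ▸ hw), Or.inl ⟨hu, hw, rfl⟩⟩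
        exact (SimpleGraph.ConnectedComponent.connectedComponentMk_eq_of_adj hadj).symm
      calc t ≤ (Cs.biUnion _).card := Finset.card_le_card hsub
        _ ≤ _ := Finset.card_biUnion_le
    have stepB : s * t ≤ ∑ i ∈ Cs, ∑ u ∈ U,
        (W.filter (fun w => (G i).connectedComponentMk w = (G i).connectedComponentMk u)).card := by
      rw [Finset.sum_comm]
      calc s * t = ∑ _u ∈ U, t := by rw [Finset.sum_const, smul_eq_mul]
        _ ≤ _ := Finset.sum_le_sum stepA
    have stepC : ∀ i ∈ Cs,
        (∑ u ∈ U, ((W.filter (fun w => (G i).connectedComponentMk w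
            = (G i).connectedComponentMk u)).card : ℝ)) * ((s : ℝ) + t) ≤ q * s * t := by
      intro i hi
      set mk : Fin n → (G i).ConnectedComponent := (G i).connectedComponentMk with hmk
      set J : Finset ((G i).ConnectedComponent) := U.image mk with hJ
      set af : (G i).ConnectedComponent → ℝ := fun K => ((U.filter (fun u => mk u = K)).card : ℝ)
        with haf
      set bf : (G i).ConnectedComponent → ℝ := fun K => ((W.filter (fun w => mk w = K)).card : ℝ)
        with hbf
      have regroup : (∑ u ∈ U, ((W.filter (fun w => mk w = mk u)).card : ℝ))
          = ∑ K ∈ J, af K * bf K := by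
        rw [← Finset.sum_fiberwise_of_maps_to (fun u hu => Finset.mem_image_of_mem mk hu)
          (fun u => ((W.filter (fun w => mk w = mk u)).card : ℝ))]
        apply Finset.sum_congr rfl
        intro K hK
        have hcg : ∀ u ∈ U.filter (fun u => mk u = K),
            ((W.filter (fun w => mk w = mk u)).card : ℝ) = bf K := by
          intro u hu
          rw [Finset.mem_filter] at hu
          rw [hbf]
          simp only [hu.2]
        rw [Finset.sum_congr rfl hcg, Finset.sum_const, nsmul_eq_mul, haf]
      have fbound : ∀ K ∈ J, af K + bf K ≤ q := by
        intro K hK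
        rw [hJ, Finset.mem_image] at hK
        obtain ⟨v, hv, hvK⟩ := hK
        have hsub : (U.filter (fun u => mk u = K)) ∪ (W.filter (fun w => mk w = K))
            ⊆ suppF i v := by
          intro x hx
          rw [hsuppF]
          rw [Set.Finite.mem_toFinset, SimpleGraph.ConnectedComponent.mem_supp_iff]
          rcases Finset.mem_union.1 hx with hx | hx
          · exact ((Finset.mem_filter.1 hx).2).trans hvK.symm
          · exact ((Finset.mem_filter.1 hx).2).trans hvK.symm
        have hdisj : Disjoint (U.filter (fun u => mk u = K)) (W.filter (fun w => mk w = K)) :=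
          Finset.disjoint_filter_filter hUW
        have hcard : (U.filter (fun u => mk u = K)).card + (W.filter (fun w => mk w = K)).card
            ≤ (suppF i v).card := by
          rw [← Finset.card_union_of_disjoint hdisj]
          exact Finset.card_le_card hsub
        have hlt : Cs.card * (suppF i v).card < s + t := hcon i v
        rw [haf, hbf, hq, le_div_iff₀ (by exact_mod_cast hm')]
        have h1 : ((U.filter (fun u => mk u = K)).card : ℝ)
            + (W.filter (fun w => mk w = K)).card ≤ ((suppF i v).card : ℝ) := by
          exact_mod_cast hcard
        have h2 : (Cs.card : ℝ) * (suppF i v).card ≤ Q := by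
          rw [hQ]
          have h3 : (Cs.card * (suppF i v).card : ℕ) + 1 ≤ s + t := hlt
          have h4 : ((Cs.card * (suppF i v).card : ℕ) : ℝ) + 1 ≤ ((s : ℝ) + t) := by
            exact_mod_cast h3
          push_cast at h4
          linarith
        nlinarith [mul_le_mul_of_nonneg_left h1 (Nat.cast_nonneg _ : (0:ℝ) ≤ (Cs.card : ℝ))]
      have hanneg : ∀ K ∈ J, 0 ≤ af K := by intro K _; rw [haf]; exact Nat.cast_nonneg _
      have hbnneg : ∀ K ∈ J, 0 ≤ bf K := by intro K _; rw [hbf]; exact Nat.cast_nonneg _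
      have hsumA : ∑ K ∈ J, af K = (s : ℝ) := by
        rw [haf, hJ, hs]
        rw [Finset.card_eq_sum_card_image mk U]
        push_cast
        rfl
      have hsumB : ∑ K ∈ J, bf K ≤ (t : ℝ) := by
        have hdisj : ∀ K1 ∈ J, ∀ K2 ∈ J, K1 ≠ K2 →
            Disjoint (W.filter (fun w => mk w = K1)) (W.filter (fun w => mk w = K2)) := by
          intro K1 _ K2 _ hne
          rw [Finset.disjoint_left]
          intro x hx1 hx2
          exact hne ((Finset.mem_filter.1 hx1).2.symm.trans (Finset.mem_filter.1 hx2).2)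
        have hcb := Finset.card_biUnion hdisj
        have hsub : J.biUnion (fun K => W.filter (fun w => mk w = K)) ⊆ W := by
          intro x hx
          rw [Finset.mem_biUnion] at hx
          obtain ⟨K, _, hx⟩ := hx
          exact (Finset.mem_filter.1 hx).1
        have : ∑ K ∈ J, (W.filter (fun w => mk w = K)).card ≤ t := by
          rw [← hcb]
          exact Finset.card_le_card hsub
        rw [hbf]
        beta_reduce
        exact_mod_cast this
      obtain ⟨h0, h1, h2⟩ := aux_milne_sum J af bf q hanneg hbnneg fbound
      rw [regroup]
      rw [hsumA] at h1 h2
      have h5 : (∑ K ∈ J, af K * bf K) * ((t:ℝ) - ∑ K ∈ J, bf K)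
          ≤ q * s * ((t:ℝ) - ∑ K ∈ J, bf K) := by
        apply mul_le_mul_of_nonneg_right h1 (by linarith)
      nlinarith [h2, h5]
    have hcast : ((s * t : ℕ) : ℝ) ≤ ∑ i ∈ Cs, ∑ u ∈ U,
        ((W.filter (fun w => (G i).connectedComponentMk w
          = (G i).connectedComponentMk u)).card : ℝ) := by
      push_cast
      exact_mod_cast stepB
    have hfinal : ((s:ℝ) * t) * ((s:ℝ) + t) ≤ Q * s * t := by
      have hmul : ((s:ℝ) * t) * ((s:ℝ) + t) ≤ (∑ i ∈ Cs, ∑ u ∈ U,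
          ((W.filter (fun w => (G i).connectedComponentMk w
            = (G i).connectedComponentMk u)).card : ℝ)) * ((s:ℝ) + t) := by
        apply mul_le_mul_of_nonneg_right _ (by linarith)
        push_cast at hcast
        exact hcast
      rw [Finset.sum_mul] at hmul
      have hsum2 : ∑ i ∈ Cs, (∑ u ∈ U,
          ((W.filter (fun w => (G i).connectedComponentMk w
            = (G i).connectedComponentMk u)).card : ℝ)) * ((s:ℝ) + t)
          ≤ ∑ _i ∈ Cs, q * s * t := Finset.sum_le_sum stepC
      rw [Finset.sum_const, nsmul_eq_mul] at hsum2
      have hqq : (Cs.card : ℝ) * (q * s * t) = Q * s * t := by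
        rw [hq]
        field_simp
      linarith
    have hst : (1:ℝ) ≤ (s:ℝ) * t := by nlinarith
    rw [hQ] at hfinal
    nlinarith
  obtain ⟨i, v, hcard⟩ := key
  refine ⟨i, suppF i v, hcard, ?_⟩
  have hconn := aux_supp_connected (G i) ((G i).connectedComponentMk v)
  have hcoe : (↑(suppF i v) : Set (Fin n)) = ((G i).connectedComponentMk v).supp := by
    rw [hsuppF]
    exact Set.Finite.coe_toFinset _
  rw [hcoe]
  exact aux_connected_mono (fun a b _ _ hab => hGle i a b hab) hconn

lemma aux_disjUnion'_adj {α β : Type*} (G : SimpleGraph α) (K : SimpleGraph β)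
    (x y : α ⊕ β) :
    (disjUnion' G K).Adj x y ↔
      (∃ p q, x = Sum.inl p ∧ y = Sum.inl q ∧ G.Adj p q) ∨
      (∃ p q, x = Sum.inr p ∧ y = Sum.inr q ∧ K.Adj p q) := by
  unfold disjUnion'
  rw [SimpleGraph.fromRel_adj]
  constructor
  · rintro ⟨hne, (⟨p, q, rfl, rfl, hpq⟩ | ⟨p, q, rfl, rfl, hpq⟩) |
      (⟨p, q, rfl, rfl, hpq⟩ | ⟨p, q, rfl, rfl, hpq⟩)⟩
    · exact Or.inl ⟨p, q, rfl, rfl, hpq⟩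
    · exact Or.inr ⟨p, q, rfl, rfl, hpq⟩
    · exact Or.inl ⟨q, p, rfl, rfl, hpq.symm⟩
    · exact Or.inr ⟨q, p, rfl, rfl, hpq.symm⟩
  · rintro (⟨p, q, rfl, rfl, hpq⟩ | ⟨p, q, rfl, rfl, hpq⟩)
    · exact ⟨fun hEq => hpq.ne (Sum.inl_injective hEq), Or.inl (Or.inl ⟨p, q, rfl, rfl, hpq⟩)⟩
    · exact ⟨fun hEq => hpq.ne (Sum.inr_injective hEq), Or.inl (Or.inr ⟨p, q, rfl, rfl, hpq⟩)⟩

lemma aux_p3_adj {p q : Fin 3} (h : (SimpleGraph.pathGraph 3).Adj p q) :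
    (p = 0 ∧ q = 1) ∨ (p = 1 ∧ q = 0) ∨ (p = 1 ∧ q = 2) ∨ (p = 2 ∧ q = 1) := by
  rw [SimpleGraph.pathGraph_adj] at h
  have hp := p.isLt
  have hq := q.isLt
  simp only [Fin.ext_iff]
  omega

lemma aux_F1 {n m h : ℕ} (H : SimpleGraph (Fin h)) (c : Sym2 (Fin n) → Fin m)
    (f : Fin h → Fin n) (hinj : Function.Injective f)
    (frb : ∀ a b a' b', H.Adj a b → H.Adj a' b' →
      c s(f a, f b) = c s(f a', f b') → s(a, b) = s(a', b'))
    (hrb : ¬ RainbowCopy (disjUnion' (SimpleGraph.pathGraph 3) H)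
      (⊤ : SimpleGraph (Fin n)) c)
    (Cs : Finset (Fin m)) (hCs : ∀ a b, H.Adj a b → c s(f a, f b) ∈ Cs)
    (u v w : Fin n) (hu : ∀ x, f x ≠ u) (hv : ∀ x, f x ≠ v) (hw : ∀ x, f x ≠ w)
    (huv : u ≠ v) (hvw : v ≠ w) (huw : u ≠ w)
    (hcu : c s(u, v) ∉ Cs) (hcw : c s(v, w) ∉ Cs) :
    c s(u, v) = c s(v, w) := by
  by_contra hne
  apply hrb
  set g : Fin 3 ⊕ Fin h → Fin n := Sum.elim ![u, v, w] f with hg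
  have hval0 : g (Sum.inl 0) = u := by simp [hg]
  have hval1 : g (Sum.inl 1) = v := by simp [hg]
  have hval2 : g (Sum.inl 2) = w := by simp [hg]
  have hvalr : ∀ x, g (Sum.inr x) = f x := by intro x; simp [hg]
  have hinl : ∀ p : Fin 3, g (Sum.inl p) = u ∨ g (Sum.inl p) = v ∨ g (Sum.inl p) = w := by
    intro p
    fin_cases p
    · exact Or.inl hval0
    · exact Or.inr (Or.inl hval1)
    · exact Or.inr (Or.inr hval2)
  have hginj : Function.Injective g := by
    intro x y hxy
    match x, y with
    | Sum.inl a, Sum.inl b =>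
      have h2 : (![u, v, w] : Fin 3 → Fin n) a = ![u, v, w] b := hxy
      congr 1
      fin_cases a <;> fin_cases b <;> first
        | rfl
        | (exact absurd (by simpa using h2) huv)
        | (exact absurd (by simpa using h2) hvw)
        | (exact absurd (by simpa using h2) huw)
        | (exact absurd (Eq.symm (by simpa using h2)) huv)
        | (exact absurd (Eq.symm (by simpa using h2)) hvw)
        | (exact absurd (Eq.symm (by simpa using h2)) huw)
    | Sum.inl a, Sum.inr b =>
      exfalso
      have h2 : (![u, v, w] : Fin 3 → Fin n) a = f b := hxy
      rcases hinl a with h3 | h3 | h3 <;> rw [show g (Sum.inl a) = ![u,v,w] a from rfl] at h3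
      · exact hu b (h2.symm.trans h3)
      · exact hv b (h2.symm.trans h3)
      · exact hw b (h2.symm.trans h3)
    | Sum.inr a, Sum.inl b =>
      exfalso
      have h2 : f a = (![u, v, w] : Fin 3 → Fin n) b := hxy
      rcases hinl b with h3 | h3 | h3 <;> rw [show g (Sum.inl b) = ![u,v,w] b from rfl] at h3
      · exact hu a (h2.trans h3)
      · exact hv a (h2.trans h3)
      · exact hw a (h2.trans h3)
    | Sum.inr a, Sum.inr b =>
      congr 1
      exact hinj hxy
  refine ⟨g, hginj, ?_, ?_⟩
  · intro a b hab
    rw [SimpleGraph.top_adj]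
    exact fun hEq => hab.ne (hginj hEq)
  · intro a b a' b' hab ha'b' hcc
    rw [aux_disjUnion'_adj] at hab ha'b'
    rcases hab with ⟨p, q, rfl, rfl, hpq⟩ | ⟨p, q, rfl, rfl, hpq⟩ <;>
      rcases ha'b' with ⟨p', q', rfl, rfl, hpq'⟩ | ⟨p', q', rfl, rfl, hpq'⟩
    · rcases aux_p3_adj hpq with ⟨rfl, rfl⟩ | ⟨rfl, rfl⟩ | ⟨rfl, rfl⟩ | ⟨rfl, rfl⟩ <;>
        rcases aux_p3_adj hpq' with ⟨rfl, rfl⟩ | ⟨rfl, rfl⟩ | ⟨rfl, rfl⟩ | ⟨rfl, rfl⟩ <;>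
        simp only [hval0, hval1, hval2] at hcc ⊢ <;>
        first
          | rfl
          | (exact Sym2.eq_swap)
          | (exact absurd hcc hne)
          | (exact absurd (hcc.trans (congrArg c Sym2.eq_swap)) hne)
          | (exact absurd ((congrArg c Sym2.eq_swap).trans hcc) hne)
          | (exact absurd (((congrArg c Sym2.eq_swap).trans hcc).trans
              (congrArg c Sym2.eq_swap)) hne)
          | (exact absurd hcc.symm hne)
          | (exact absurd (hcc.symm.trans (congrArg c Sym2.eq_swap)) hne)
          | (exact absurd ((congrArg c Sym2.eq_swap).trans hcc.symm) hne)
          | (exact absurd (((congrArg c Sym2.eq_swap).trans hcc.symm).trans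
              (congrArg c Sym2.eq_swap)) hne)
    · exfalso
      rw [hvalr, hvalr] at hcc
      have hmem := hCs p' q' hpq'
      rw [← hcc] at hmem
      rcases aux_p3_adj hpq with ⟨rfl, rfl⟩ | ⟨rfl, rfl⟩ | ⟨rfl, rfl⟩ | ⟨rfl, rfl⟩ <;>
        simp only [hval0, hval1, hval2] at hmem <;>
        first
          | (exact hcu hmem)
          | (exact hcw hmem)
          | (exact hcu (by rwa [Sym2.eq_swap] at hmem))
          | (exact hcw (by rwa [Sym2.eq_swap] at hmem))
    · exfalso
      rw [hvalr, hvalr] at hcc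
      have hmem := hCs p q hpq
      rw [hcc] at hmem
      rcases aux_p3_adj hpq' with ⟨rfl, rfl⟩ | ⟨rfl, rfl⟩ | ⟨rfl, rfl⟩ | ⟨rfl, rfl⟩ <;>
        simp only [hval0, hval1, hval2] at hmem <;>
        first
          | (exact hcu hmem)
          | (exact hcw hmem)
          | (exact hcu (by rwa [Sym2.eq_swap] at hmem))
          | (exact hcw (by rwa [Sym2.eq_swap] at hmem))
    · rw [hvalr, hvalr, hvalr, hvalr] at hcc
      have := frb p q p' q' hpq hpq' hcc
      rcases Sym2.eq_iff.mp this with ⟨rfl, rfl⟩ | ⟨rfl, rfl⟩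
      · rfl
      · exact Sym2.eq_swap

lemma aux_walk_color {V α : Type*} {N : SimpleGraph V} {c : Sym2 V → α}
    (loc : ∀ a b b', N.Adj a b → N.Adj a b' → c s(a, b) = c s(a, b')) :
    ∀ {u a : V} (_p : N.Walk u a) {v₀ b : V}, N.Adj u v₀ → N.Adj a b →
      c s(a, b) = c s(u, v₀) := by
  intro u a p
  induction p with
  | nil =>
    intro v₀ b h1 h2
    exact loc _ _ _ h2 h1
  | @cons u x a h p ih =>
    intro v₀ b h1 h2
    have hmid := ih h.symm h2
    rw [hmid, Sym2.eq_swap]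
    exact loc _ _ _ h h1

lemma aux_reach_adj {V : Type*} {N : SimpleGraph V} {u z : V} (hr : N.Reachable u z) :
    z = u ∨ ∃ y, N.Adj z y := by
  obtain ⟨p⟩ := hr
  cases hp : p.reverse with
  | nil => exact Or.inl rfl
  | cons h q => exact Or.inr ⟨_, h⟩

set_option maxHeartbeats 1000000 in
/-- If every rainbow-`H`-free `m`-coloring of `Kₙ` has a connected monochromatic
subgraph on more than `(n − |V(H)|)/|E(H)|` vertices, then every rainbow
`(P₃ ∪ H)`-free `m`-coloring of `Kₙ` has one on at least that many vertices. -/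
theorem stmt_12 (k m n h : ℕ) (H : SimpleGraph (Fin h)) (hk : 1 ≤ k) (hm : 7 ≤ m)
    (hn : ((m : ℝ) + 11) * ((k : ℝ) - 1) + 7 * k * Real.log k + 2 * m + 3 ≤ n)
    (hyp : ∀ c' : Sym2 (Fin n) → Fin m, UsesAll c' →
      ¬ RainbowCopy H (⊤ : SimpleGraph (Fin n)) c' →
      ∃ (i : Fin m) (S : Finset (Fin n)),
        ((n : ℝ) - h) / (H.edgeSet.ncard : ℝ) < S.card ∧
        ((monoGraph c' i).induce (↑S : Set (Fin n))).Connected)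
    (c : Sym2 (Fin n) → Fin m) (hall : UsesAll c)
    (hrb : ¬ RainbowCopy (disjUnion' (SimpleGraph.pathGraph 3) H)
      (⊤ : SimpleGraph (Fin n)) c) :
    ∃ (i : Fin m) (S : Finset (Fin n)),
      ((n : ℝ) - h) / (H.edgeSet.ncard : ℝ) ≤ S.card ∧
      ((monoGraph c i).induce (↑S : Set (Fin n))).Connected := by
  classical
  rcases Classical.em (RainbowCopy H (⊤ : SimpleGraph (Fin n)) c) with hH | hH
  swap
  · obtain ⟨i, S, hlt, hconn⟩ := hyp c hall hH
    exact ⟨i, S, hlt.le, hconn⟩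
  obtain ⟨f, finj, -, frb⟩ := hH
  -- basic numeric facts
  have hk1 : (1:ℝ) ≤ (k:ℝ) := by exact_mod_cast hk
  have hlog : 0 ≤ Real.log k := Real.log_nonneg hk1
  have hm7 : (7:ℝ) ≤ (m:ℝ) := by exact_mod_cast hm
  have hn17 : (17:ℝ) ≤ (n:ℝ) := by nlinarith [hn, hk1, hlog, hm7]
  have hn1 : 1 ≤ n := by exact_mod_cast (by linarith : (1:ℝ) ≤ (n:ℝ))
  set e := H.edgeSet.ncard with he
  by_cases htriv : ((n:ℝ) - h) / (e:ℝ) ≤ 1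
  · refine ⟨⟨0, by omega⟩, {⟨0, by omega⟩}, ?_, ?_⟩
    · rw [Finset.card_singleton]
      exact_mod_cast htriv
    · have := aux_singleton_connected (monoGraph c ⟨0, by omega⟩) ⟨0, by omega⟩
      rwa [← Finset.coe_singleton] at this
  · push_neg at htriv
    have he1 : 1 ≤ e := by
      by_contra hcon
      have : e = 0 := by omega
      rw [this] at htriv
      norm_num at htriv
    have hepos : (0:ℝ) < (e:ℝ) := by exact_mod_cast he1
    have hnh : (e:ℝ) < (n:ℝ) - h := (one_lt_div hepos).mp htriv
    have he1' : (1:ℝ) ≤ (e:ℝ) := by exact_mod_cast he1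
    have hhn : h + 1 ≤ n := by
      have : (h:ℝ) + 1 ≤ (n:ℝ) := by linarith
      exact_mod_cast this
    have hhn' : h ≤ n := by omega
    -- the finsets
    set eF := (Set.toFinite H.edgeSet).toFinset with heF
    have heFcard : e = eF.card := by
      rw [he, heF]
      exact Set.ncard_eq_toFinset_card _ _
    set Cs := eF.image (fun ed => c (Sym2.map f ed)) with hCsdef
    have hCsle : Cs.card ≤ e := by
      rw [heFcard]
      exact Finset.card_image_le
    have hCsmem : ∀ a b, H.Adj a b → c s(f a, f b) ∈ Cs := by
      intro a b hab
      rw [hCsdef]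
      refine Finset.mem_image.2 ⟨s(a, b), ?_, ?_⟩
      · rw [heF, Set.Finite.mem_toFinset]
        exact hab
      · rw [Sym2.map_pair_eq]
    set A := Finset.image f Finset.univ with hAdef
    set B := Aᶜ with hBdef
    have hAcard : A.card = h := by
      rw [hAdef, Finset.card_image_of_injective _ finj, Finset.card_univ, Fintype.card_fin]
    have hBcard : B.card = n - h := by
      rw [hBdef, Finset.card_compl, hAcard, Fintype.card_fin]
    have hBreal : ((B.card : ℝ)) = (n:ℝ) - h := by
      rw [hBcard]
      push_cast [Nat.cast_sub hhn']
      ring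
    have hBf : ∀ x ∈ B, ∀ y, f y ≠ x := by
      intro x hx y hfy
      rw [hBdef, Finset.mem_compl] at hx
      exact hx (Finset.mem_image.2 ⟨y, Finset.mem_univ y, hfy⟩)
    have F1 : ∀ u v w : Fin n, u ∈ B → v ∈ B → w ∈ B → u ≠ v → v ≠ w → u ≠ w →
        c s(u, v) ∉ Cs → c s(v, w) ∉ Cs → c s(u, v) = c s(v, w) := by
      intro u v w huB hvB hwB h1 h2 h3 h4 h5
      exact aux_F1 H c f finj frb hrb Cs hCsmem u v w
        (fun x => hBf u huB x) (fun x => hBf v hvB x) (fun x => hBf w hwB x)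
        h1 h2 h3 h4 h5
    have hBn : 2 ≤ n - h := by
      have h1r : (h:ℝ) + 1 < (n:ℝ) := by linarith
      have h2r : h + 1 < n := by exact_mod_cast h1r
      omega
    -- reduce goal
    suffices hsuf : ∃ (i : Fin m) (S : Finset (Fin n)), ((n - h : ℕ) : ℝ) ≤ (e:ℝ) * S.card ∧
        ((monoGraph c i).induce (↑S : Set (Fin n))).Connected by
      obtain ⟨i, S, h1, h2⟩ := hsuf
      refine ⟨i, S, ?_, h2⟩
      rw [div_le_iff₀ hepos]
      have : ((n - h : ℕ) : ℝ) = (n:ℝ) - h := by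
        push_cast [Nat.cast_sub hhn']
        ring
      rw [← this]
      linarith [h1]
    by_cases hstar : ∃ u ∈ B, ∀ v ∈ B, v ≠ u → c s(u, v) ∈ Cs
    · -- star case
      obtain ⟨u, huB, hustar⟩ := hstar
      set T := B.erase u with hTdef
      have hTcard : T.card = n - h - 1 := by
        rw [hTdef, Finset.card_erase_of_mem huB, hBcard]
      have hCs0 : 0 < Cs.card := by
        obtain ⟨x, hx⟩ : eF.Nonempty := by
          rw [← Finset.card_pos, ← heFcard]; omega
        exact Finset.card_pos.2 ⟨_, Finset.mem_image_of_mem _ hx⟩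
      set d := T.card / Cs.card with hd
      have hmaps : ∀ v ∈ T, c s(u, v) ∈ Cs := fun v hv =>
        hustar v (Finset.mem_of_mem_erase hv) (Finset.ne_of_mem_erase hv)
      have hpig : ∃ i ∈ Cs, d ≤ (T.filter (fun v => c s(u, v) = i)).card := by
        apply Finset.exists_le_card_fiber_of_mul_le_card_of_maps_to hmaps
          (Finset.card_pos.1 hCs0)
        rw [hd]
        exact Nat.mul_div_le T.card Cs.card
      obtain ⟨i, hiCs, hfib⟩ := hpig
      set F := T.filter (fun v => c s(u, v) = i) with hFdef
      have huF : u ∉ F := fun hc => (Finset.ne_of_mem_erase (Finset.mem_of_mem_filter u hc)) rfl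
      refine ⟨i, insert u F, ?_, ?_⟩
      · have hScard : (insert u F).card = F.card + 1 := Finset.card_insert_of_notMem huF
        rw [hScard]
        have hnat : n - h ≤ e * (F.card + 1) := by
          have hfd : d + 1 ≤ F.card + 1 := by omega
          have hmm : Cs.card * (d + 1) ≤ e * (F.card + 1) := Nat.mul_le_mul hCsle hfd
          have hr : T.card % Cs.card < Cs.card := Nat.mod_lt _ hCs0
          have hchain : T.card + 1 ≤ Cs.card * (d + 1) := by
            calc T.card + 1 = Cs.card * d + T.card % Cs.card + 1 := by
                  rw [hd, Nat.div_add_mod]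
              _ = Cs.card * d + (T.card % Cs.card + 1) := by ring
              _ ≤ Cs.card * d + Cs.card := Nat.add_le_add_left (by omega) _
              _ = Cs.card * (d + 1) := by ring
          calc n - h = T.card + 1 := by rw [hTcard]; omega
            _ ≤ Cs.card * (d + 1) := hchain
            _ ≤ e * (F.card + 1) := hmm
        exact_mod_cast hnat
      · apply aux_star_connected (monoGraph c i) u
        · rw [Finset.coe_insert]
          exact Set.mem_insert u _
        · intro v hv hvu
          rw [Finset.coe_insert, Set.mem_insert_iff] at hv
          rcases hv with rfl | hv
          · exact absurd rfl hvu
          · rw [Finset.mem_coe, hFdef, Finset.mem_filter] at hv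
            rw [monoGraph_adj]
            exact ⟨fun hc => hvu hc.symm, hv.2⟩
    · -- no star: every vertex of B has a "new" edge
      push_neg at hstar
      set N : SimpleGraph (Fin n) :=
        SimpleGraph.fromRel (fun x y => x ∈ B ∧ y ∈ B ∧ c s(x, y) ∉ Cs) with hNdef
      have hNadj : ∀ x y, N.Adj x y ↔ x ≠ y ∧ (x ∈ B ∧ y ∈ B ∧ c s(x, y) ∉ Cs) := by
        intro x y
        rw [hNdef, SimpleGraph.fromRel_adj]
        constructor
        · rintro ⟨hne, hrel | hrel⟩
          · exact ⟨hne, hrel⟩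
          · exact ⟨hne, hrel.2.1, hrel.1, by rw [Sym2.eq_swap]; exact hrel.2.2⟩
        · rintro ⟨hne, hrel⟩
          exact ⟨hne, Or.inl hrel⟩
      have loc : ∀ a b b', N.Adj a b → N.Adj a b' → c s(a, b) = c s(a, b') := by
        intro a b b' h1 h2
        by_cases hbb : b = b'
        · rw [hbb]
        · rw [hNadj] at h1 h2
          have hres := F1 b a b' h1.2.2.1 h1.2.1 h2.2.2.1 (Ne.symm h1.1) h2.1 hbb
            (by rw [Sym2.eq_swap]; exact h1.2.2.2) h2.2.2.2
          rw [← hres, Sym2.eq_swap]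
      have hsuppB : ∀ u ∈ B, ∀ z,
          z ∈ (Set.toFinite (N.connectedComponentMk u).supp).toFinset → z ∈ B := by
        intro u huB z hz
        rw [Set.Finite.mem_toFinset, SimpleGraph.ConnectedComponent.mem_supp_iff] at hz
        have hr : N.Reachable u z := SimpleGraph.ConnectedComponent.exact hz.symm
        rcases aux_reach_adj hr with rfl | ⟨y, hy⟩
        · exact huB
        · exact ((hNadj z y).1 hy).2.1
      by_cases hbig : ∃ u ∈ B,
          n - h ≤ e * ((Set.toFinite (N.connectedComponentMk u).supp).toFinset.card)
      · obtain ⟨u, huB, hule⟩ := hbig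
        obtain ⟨v₀, hv₀B, hv₀ne, hv₀c⟩ := hstar u huB
        have hadj0 : N.Adj u v₀ := (hNadj u v₀).2 ⟨Ne.symm hv₀ne, huB, hv₀B, hv₀c⟩
        set x := c s(u, v₀) with hx
        refine ⟨x, (Set.toFinite (N.connectedComponentMk u).supp).toFinset, ?_, ?_⟩
        · exact_mod_cast hule
        · have hcoe : ((Set.toFinite (N.connectedComponentMk u).supp).toFinset : Set (Fin n))
              = (N.connectedComponentMk u).supp := Set.Finite.coe_toFinset _
          rw [hcoe]
          apply aux_connected_mono (G := N)
          · intro a b ha hb hab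
            rw [SimpleGraph.ConnectedComponent.mem_supp_iff] at ha
            have hr : N.Reachable u a := SimpleGraph.ConnectedComponent.exact ha.symm
            obtain ⟨p⟩ := hr
            have := aux_walk_color loc p hadj0 hab
            rw [monoGraph_adj]
            exact ⟨hab.ne, this⟩
          · exact aux_supp_connected N (N.connectedComponentMk u)
      · push_neg at hbig
        have hBne : B.Nonempty := by
          rw [← Finset.card_pos, hBcard]; omega
        obtain ⟨u₁, hu₁B⟩ := hBne
        set U := (Set.toFinite (N.connectedComponentMk u₁).supp).toFinset with hUdef
        have hUB : U ⊆ B := fun z hz => hsuppB u₁ hu₁B z hz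
        have hu₁U : u₁ ∈ U := by
          rw [hUdef, Set.Finite.mem_toFinset, SimpleGraph.ConnectedComponent.mem_supp_iff]
        have hUcard : e * U.card < n - h := hbig u₁ hu₁B
        set W := B \ U with hWdef
        have hWne : W.Nonempty := by
          rw [← Finset.card_pos, hWdef, Finset.card_sdiff_of_subset hUB, hBcard]
          have hU1 : U.card ≤ e * U.card := Nat.le_mul_of_pos_left _ (by omega)
          omega
        have hUW : Disjoint U W := Finset.disjoint_sdiff
        have hcross : ∀ a ∈ U, ∀ b ∈ W, c s(a, b) ∈ Cs := by
          intro a haU b hbW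
          by_contra hc
          have hbB : b ∈ B := (Finset.mem_sdiff.1 hbW).1
          have hbU : b ∉ U := (Finset.mem_sdiff.1 hbW).2
          have hab : a ≠ b := fun hEq => hbU (hEq ▸ haU)
          have hadj : N.Adj a b := (hNadj a b).2 ⟨hab, hUB haU, hbB, hc⟩
          apply hbU
          rw [hUdef, Set.Finite.mem_toFinset, SimpleGraph.ConnectedComponent.mem_supp_iff]
          rw [hUdef, Set.Finite.mem_toFinset, SimpleGraph.ConnectedComponent.mem_supp_iff] at haU
          exact (SimpleGraph.ConnectedComponent.connectedComponentMk_eq_of_adj hadj.symm).trans haU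
        obtain ⟨i, S, hcard, hconn⟩ := aux_LMP c U W Cs hUW ⟨u₁, hu₁U⟩ hWne hcross
        refine ⟨i, S, ?_, hconn⟩
        have hsplit : U.card + W.card = n - h := by
          rw [hWdef, Finset.card_sdiff_of_subset hUB, hBcard]
          have hUle : U.card ≤ B.card := Finset.card_le_card hUB
          rw [hBcard] at hUle
          omega
        have hnat : n - h ≤ e * S.card := by
          calc n - h = U.card + W.card := hsplit.symm
            _ ≤ Cs.card * S.card := hcard
            _ ≤ e * S.card := Nat.mul_le_mul_right _ hCsle
        exact_mod_cast hnat
end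

section
/- Every edge-coloring of the complete bipartite graph K_{s,t} with m colors contains a monochromatic connected subgraph on at least (s+t)/m vertices. -/
open Finset SimpleGraph

section Aux

open Finset

private lemma nat_sq_sum {m : ℕ} (f : Fin m → ℕ) :
    (∑ i, f i) ^ 2 ≤ m * ∑ i, (f i) ^ 2 := by
  have h := sq_sum_le_card_mul_sum_sq (s := (univ : Finset (Fin m)))
    (f := fun i => (f i : ℤ))
  simp only [card_univ, Fintype.card_fin] at h
  exact_mod_cast h

end Aux

/-- Every `m`-coloring of `K_{s,t}` has a monochromatic connected subgraph on at
least `(s+t)/m` vertices. -/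
theorem stmt_13 (s t m : ℕ) (hs : 1 ≤ s) (ht : 1 ≤ t)
    (c : Sym2 (Fin s ⊕ Fin t) → Fin m) :
    ∃ (i : Fin m) (S : Finset (Fin s ⊕ Fin t)),
      ((s : ℝ) + t) / m ≤ S.card ∧
      ((monoBiGraph c i).induce (↑S : Set (Fin s ⊕ Fin t))).Connected := by
  classical
  have hm : 0 < m := (c s(Sum.inl ⟨0, hs⟩, Sum.inr ⟨0, ht⟩)).pos
  set col : Fin s → Fin t → Fin m := fun u v => c s(Sum.inl u, Sum.inr v) with hcol
  set D : Fin s → Fin m → ℕ := fun u i => #(univ.filter fun v => col u v = i) with hD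
  set E : Fin t → Fin m → ℕ := fun v i => #(univ.filter fun u => col u v = i) with hE
  have hDt : ∀ u, ∑ i, D u i = t := by
    intro u
    have := (card_eq_sum_card_fiberwise (f := col u) (s := univ)
      (t := univ) (fun x _ => mem_univ _)).symm
    simpa [hD] using this
  have hEs : ∀ v, ∑ i, E v i = s := by
    intro v
    have := (card_eq_sum_card_fiberwise (f := fun u => col u v) (s := univ)
      (t := univ) (fun x _ => mem_univ _)).symm
    simpa [hE] using this
  have hDsq : ∀ u, ∑ v, D u (col u v) = ∑ i, (D u i) ^ 2 := by
    intro u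
    rw [← sum_fiberwise_of_maps_to' (g := col u) (fun v _ => mem_univ _) (D u)]
    refine Finset.sum_congr rfl fun j _ => ?_
    rw [sum_const, smul_eq_mul, sq]
  have hEsq : ∀ v, ∑ u, E v (col u v) = ∑ i, (E v i) ^ 2 := by
    intro v
    rw [← sum_fiberwise_of_maps_to' (g := fun u => col u v) (fun u _ => mem_univ _) (E v)]
    refine Finset.sum_congr rfl fun j _ => ?_
    rw [sum_const, smul_eq_mul, sq]
  -- key averaging step
  have key : ∃ u v, s + t ≤ m * (D u (col u v) + E v (col u v)) := by
    by_contra hcon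
    push_neg at hcon
    have hbig : s * t * (s + t) ≤
        ∑ p : Fin s × Fin t, m * (D p.1 (col p.1 p.2) + E p.2 (col p.1 p.2)) := by
      have hsplit : ∑ p : Fin s × Fin t, m * (D p.1 (col p.1 p.2) + E p.2 (col p.1 p.2))
          = m * (∑ u, ∑ i, (D u i) ^ 2) + m * (∑ v, ∑ i, (E v i) ^ 2) := by
        rw [← mul_sum, ← mul_add]
        congr 1
        rw [Fintype.sum_prod_type]
        dsimp only
        simp only [Finset.sum_add_distrib]
        congr 1
        · exact Finset.sum_congr rfl fun u _ => hDsq u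
        · rw [Finset.sum_comm]
          exact Finset.sum_congr rfl fun v _ => hEsq v
      rw [hsplit]
      have h1 : s * t ^ 2 ≤ m * ∑ u, ∑ i, (D u i) ^ 2 := by
        rw [mul_sum]
        calc s * t ^ 2 = ∑ _u : Fin s, t ^ 2 := by simp [mul_comm]
          _ ≤ ∑ u, m * ∑ i, (D u i) ^ 2 := by
              refine Finset.sum_le_sum fun u _ => ?_
              calc t ^ 2 = (∑ i, D u i) ^ 2 := by rw [hDt u]
                _ ≤ m * ∑ i, (D u i) ^ 2 := nat_sq_sum _
      have h2 : t * s ^ 2 ≤ m * ∑ v, ∑ i, (E v i) ^ 2 := by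
        rw [mul_sum]
        calc t * s ^ 2 = ∑ _v : Fin t, s ^ 2 := by simp [mul_comm]
          _ ≤ ∑ v, m * ∑ i, (E v i) ^ 2 := by
              refine Finset.sum_le_sum fun v _ => ?_
              calc s ^ 2 = (∑ i, E v i) ^ 2 := by rw [hEs v]
                _ ≤ m * ∑ i, (E v i) ^ 2 := nat_sq_sum _
      calc s * t * (s + t) = s * t ^ 2 + t * s ^ 2 := by ring
        _ ≤ _ := Nat.add_le_add h1 h2
    have hsmall : ∑ p : Fin s × Fin t, m * (D p.1 (col p.1 p.2) + E p.2 (col p.1 p.2))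
        ≤ s * t * (s + t - 1) := by
      calc _ ≤ ∑ _p : Fin s × Fin t, (s + t - 1) := by
              refine Finset.sum_le_sum fun p _ => ?_
              have := hcon p.1 p.2
              omega
        _ = s * t * (s + t - 1) := by simp [Fintype.card_prod, mul_assoc]
    have h3 := le_trans hbig hsmall
    have h4 : s + t ≤ s + t - 1 :=
      Nat.le_of_mul_le_mul_left h3 (by positivity)
    omega
  obtain ⟨u, v, huv⟩ := key
  set i := col u v with hi
  refine ⟨i, ((univ.filter fun w => col u w = i).image Sum.inr) ∪
      ((univ.filter fun w => col w v = i).image Sum.inl), ?_, ?_⟩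
  · -- cardinality
    have hdisj : Disjoint ((univ.filter fun w => col u w = i).image
        (Sum.inr : Fin t → Fin s ⊕ Fin t))
        ((univ.filter fun w => col w v = i).image Sum.inl) := by
      simp only [Finset.disjoint_left, Finset.mem_image]
      rintro x ⟨a, _, rfl⟩ ⟨b, _, h⟩
      exact Sum.inl_ne_inr h
    rw [Finset.card_union_of_disjoint hdisj,
      Finset.card_image_of_injective _ Sum.inr_injective,
      Finset.card_image_of_injective _ Sum.inl_injective,
      div_le_iff₀ (by exact_mod_cast hm : (0:ℝ) < m), mul_comm]
    exact_mod_cast huv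
  · -- connectivity
    set S : Finset (Fin s ⊕ Fin t) :=
      ((univ.filter fun w => col u w = i).image Sum.inr) ∪
        ((univ.filter fun w => col w v = i).image Sum.inl) with hS
    have hvS : Sum.inr v ∈ S := by
      refine Finset.mem_union_left _ (Finset.mem_image_of_mem _ ?_)
      simp [hi]
    have huS : Sum.inl u ∈ S := by
      refine Finset.mem_union_right _ (Finset.mem_image_of_mem _ ?_)
      simp [hi]
    have adj1 : ∀ w : Fin t, col u w = i → (monoBiGraph c i).Adj (Sum.inl u) (Sum.inr w) := by
      intro w hw
      exact ⟨by simp, Or.inl ⟨by simp, hw⟩⟩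
    have adj2 : ∀ w : Fin s, col w v = i → (monoBiGraph c i).Adj (Sum.inl w) (Sum.inr v) := by
      intro w hw
      exact ⟨by simp, Or.inl ⟨by simp, hw⟩⟩
    rw [connected_iff]
    constructor
    · have reach : ∀ x : (↑S : Set (Fin s ⊕ Fin t)),
          ((monoBiGraph c i).induce (↑S : Set (Fin s ⊕ Fin t))).Reachable x ⟨Sum.inl u, huS⟩ := by
        rintro ⟨x, hx⟩
        have hx' : x ∈ S := hx
        rcases Finset.mem_union.1 hx' with h | h
        · obtain ⟨w, hw, rfl⟩ := Finset.mem_image.1 h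
          have hwc : col u w = i := by simpa using hw
          have hadj : ((monoBiGraph c i).induce (↑S : Set (Fin s ⊕ Fin t))).Adj
              ⟨Sum.inr w, hx⟩ ⟨Sum.inl u, huS⟩ := (adj1 w hwc).symm
          exact hadj.reachable
        · obtain ⟨w, hw, rfl⟩ := Finset.mem_image.1 h
          have hwc : col w v = i := by simpa using hw
          have e1 : ((monoBiGraph c i).induce (↑S : Set (Fin s ⊕ Fin t))).Adj
              ⟨Sum.inl w, hx⟩ ⟨Sum.inr v, by exact hvS⟩ := adj2 w hwc
          have e2 : ((monoBiGraph c i).induce (↑S : Set (Fin s ⊕ Fin t))).Adj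
              ⟨Sum.inr v, by exact hvS⟩ ⟨Sum.inl u, huS⟩ := (adj1 v hi.symm).symm
          exact e1.reachable.trans e2.reachable
      intro x y
      exact (reach x).trans (reach y).symm
    · exact ⟨⟨Sum.inl u, huS⟩⟩
end

section
/- For any graph H on h vertices with e ≥ 1 edges, let k ≥ 2, m ≥ max{k/2 + 8, 77}, and n ≥ 99·k²·m². Suppose every rainbow-H-free m-coloring of K_n contains a k-connected monochromatic subgraph on more than (n − h)/(9e) vertices. Then every edge-coloring of K_n using exactly m colors that contains no rainbow copy of P_3 ∪ H contains a k-connected monochromatic subgraph on at least (n − h)/(9e) vertices. -/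
open Finset SimpleGraph

section conn
variable {n : ℕ}

def stepRel (G : SimpleGraph (Fin n)) (A : Finset (Fin n)) (x y : Fin n) : Prop :=
  x ∈ A ∧ y ∈ A ∧ G.Adj x y

def ConnOn (G : SimpleGraph (Fin n)) (A : Finset (Fin n)) : Prop :=
  A.Nonempty ∧ ∀ x ∈ A, ∀ y ∈ A, Relation.ReflTransGen (stepRel G A) x y

def KConnOn (k : ℕ) (G : SimpleGraph (Fin n)) (S : Finset (Fin n)) : Prop :=
  k + 1 ≤ S.card ∧ ∀ T : Finset (Fin n), T ⊆ S → T.card < k → ConnOn G (S \ T)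

lemma kConnOn_mono {G G' : SimpleGraph (Fin n)} {S : Finset (Fin n)} {k : ℕ}
    (h : ∀ x y, x ∈ S → y ∈ S → G.Adj x y → G'.Adj x y)
    (hK : KConnOn k G S) : KConnOn k G' S := by
  refine ⟨hK.1, fun T hTS hTc => ?_⟩
  obtain ⟨hne, hconn⟩ := hK.2 T hTS hTc
  refine ⟨hne, fun x hx y hy => ?_⟩
  refine Relation.ReflTransGen.mono (show ∀ a b, stepRel G (S \ T) a b → stepRel G' (S \ T) a b from ?_) x y (hconn x hx y hy)
  rintro a b ⟨ha, hb, hab⟩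
  exact ⟨ha, hb, h a b (sdiff_subset ha) (sdiff_subset hb) hab⟩

lemma kConnOn_kConn {G : SimpleGraph (Fin n)} {S : Finset (Fin n)} {k : ℕ}
    (hK : KConnOn k G S) : KConn k (G.induce (↑S : Set (Fin n))) := by
  classical
  constructor
  · simpa [Fintype.card_coe] using hK.1
  · intro s hs
    set T : Finset (Fin n) := s.image Subtype.val with hT
    have hTS : T ⊆ S := by
      intro x hx
      obtain ⟨y, _, rfl⟩ := Finset.mem_image.1 hx
      exact Finset.mem_coe.1 y.2
    have hTc : T.card < k := lt_of_le_of_lt Finset.card_image_le hs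
    obtain ⟨hne, hconn⟩ := hK.2 T hTS hTc
    have memT : ∀ (x : (↑S : Set (Fin n))) (hx : x ∈ ((↑s : Set (↑S : Set (Fin n))))),
        (x : Fin n) ∈ T := fun x hx => Finset.mem_image_of_mem _ hx
    have memT' : ∀ (x : (↑S : Set (Fin n))), (x : Fin n) ∈ T → x ∈ ((↑s : Set (↑S : Set (Fin n)))) := by
      intro x hx
      obtain ⟨y, hy, hyx⟩ := Finset.mem_image.1 hx
      rwa [show y = x from Subtype.ext hyx] at hy
    have lift : ∀ x, x ∈ S \ T → ∃ v : ((↑s : Set (↑S : Set (Fin n)))ᶜ : Set _),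
        ((v : (↑S : Set (Fin n))) : Fin n) = x := by
      intro x hx
      obtain ⟨hxS, hxT⟩ := mem_sdiff.1 hx
      exact ⟨⟨⟨x, hxS⟩, fun hmem => hxT (memT _ hmem)⟩, rfl⟩
    obtain ⟨x0, hx0⟩ := hne
    obtain ⟨v0, _⟩ := lift x0 hx0
    haveI : Nonempty ((↑s : Set (↑S : Set (Fin n)))ᶜ : Set _) := ⟨v0⟩
    refine SimpleGraph.Connected.mk ?_
    intro u v
    have key : ∀ x y, Relation.ReflTransGen (stepRel G (S \ T)) x y →
        ∀ (u' v' : ((↑s : Set (↑S : Set (Fin n)))ᶜ : Set _)),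
        ((u' : (↑S : Set (Fin n))) : Fin n) = x → ((v' : (↑S : Set (Fin n))) : Fin n) = y →
        ((G.induce (↑S : Set (Fin n))).induce ((↑s : Set (↑S : Set (Fin n)))ᶜ)).Reachable u' v' := by
      intro x y hxy
      induction hxy with
      | refl =>
        intro u' v' hu hv
        have : u' = v' := by
          apply Subtype.ext; apply Subtype.ext; rw [hu, hv]
        rw [this]
      | @tail b cc hstep hlast ih =>
        intro u' v' hu hv
        obtain ⟨hb, hc, hadj⟩ := hlast
        obtain ⟨b', hb'⟩ := lift b hb
        refine (ih u' b' hu hb').trans (SimpleGraph.Adj.reachable ?_)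
        have hA : G.Adj ((b' : (↑S : Set (Fin n))) : Fin n) ((v' : (↑S : Set (Fin n))) : Fin n) := by
          rw [hb', hv]; exact hadj
        exact hA
    have hu : ((u : (↑S : Set (Fin n))) : Fin n) ∈ S \ T := by
      refine mem_sdiff.2 ⟨(u : (↑S : Set (Fin n))).2, fun hmem => ?_⟩
      exact u.2 (memT' _ hmem)
    have hv : ((v : (↑S : Set (Fin n))) : Fin n) ∈ S \ T := by
      refine mem_sdiff.2 ⟨(v : (↑S : Set (Fin n))).2, fun hmem => ?_⟩
      exact v.2 (memT' _ hmem)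
    exact key _ _ (hconn _ hu _ hv) u v rfl rfl

end conn

section mader
open scoped Classical
variable {n : ℕ}
noncomputable def din (G : SimpleGraph (Fin n)) (S : Finset (Fin n)) : ℕ :=
  (S.offDiag.filter fun p => G.Adj p.1 p.2).card

lemma din_le (G : SimpleGraph (Fin n)) (S : Finset (Fin n)) :
    din G S ≤ S.card * S.card - S.card := by
  classical
  calc din G S ≤ S.offDiag.card := Finset.card_filter_le _ _
  _ = _ := Finset.offDiag_card S

lemma din_erase (G : SimpleGraph (Fin n)) (S : Finset (Fin n)) (v : Fin n) :
    din G S ≤ din G (S.erase v) + 2 * ((S.erase v).filter (fun w => G.Adj v w)).card := by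
  classical
  unfold din
  have hsub : S.offDiag.filter (fun p => G.Adj p.1 p.2) ⊆
      ((S.erase v).offDiag.filter fun p => G.Adj p.1 p.2) ∪
      (((S.erase v).filter (fun w => G.Adj v w)).image (fun w => (v, w))) ∪
      (((S.erase v).filter (fun w => G.Adj v w)).image (fun w => (w, v))) := by
    rintro ⟨x, y⟩ hp
    obtain ⟨hoff, hadj⟩ := Finset.mem_filter.1 hp
    obtain ⟨hx, hy, hxy⟩ := Finset.mem_offDiag.1 hoff
    simp only [Finset.mem_union, Finset.mem_filter, Finset.mem_image, Finset.mem_offDiag]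
    by_cases hxv : x = v
    · subst hxv
      exact Or.inl (Or.inr ⟨y, ⟨Finset.mem_erase.2 ⟨Ne.symm hxy, hy⟩, hadj⟩, rfl⟩)
    · by_cases hyv : y = v
      · subst hyv
        exact Or.inr ⟨x, ⟨Finset.mem_erase.2 ⟨hxv, hx⟩, hadj.symm⟩, rfl⟩
      · exact Or.inl (Or.inl ⟨⟨Finset.mem_erase.2 ⟨hxv, hx⟩, Finset.mem_erase.2 ⟨hyv, hy⟩, hxy⟩, hadj⟩)
  calc (S.offDiag.filter fun p => G.Adj p.1 p.2).card ≤ _ := Finset.card_le_card hsub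
  _ ≤ ((S.erase v).offDiag.filter fun p => G.Adj p.1 p.2).card +
      (((S.erase v).filter (fun w => G.Adj v w)).image (fun w => (v, w))).card +
      (((S.erase v).filter (fun w => G.Adj v w)).image (fun w => (w, v))).card := by
        exact le_trans (Finset.card_union_le _ _)
          (Nat.add_le_add_right (Finset.card_union_le _ _) _)
  _ ≤ _ := by
    have h1 := Finset.card_image_le (s := (S.erase v).filter (fun w => G.Adj v w))
      (f := fun w => (v, w))
    have h2 := Finset.card_image_le (s := (S.erase v).filter (fun w => G.Adj v w))
      (f := fun w => (w, v))
    omega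

lemma din_split (G : SimpleGraph (Fin n)) (S S₁ S₂ : Finset (Fin n))
    (hS : ∀ x y, x ∈ S → y ∈ S → G.Adj x y → (x ∈ S₁ ∧ y ∈ S₁) ∨ (x ∈ S₂ ∧ y ∈ S₂)) :
    din G S ≤ din G S₁ + din G S₂ := by
  classical
  unfold din
  have hsub : S.offDiag.filter (fun p => G.Adj p.1 p.2) ⊆
      (S₁.offDiag.filter fun p => G.Adj p.1 p.2) ∪ (S₂.offDiag.filter fun p => G.Adj p.1 p.2) := by
    rintro ⟨x, y⟩ hp
    obtain ⟨hoff, hadj⟩ := Finset.mem_filter.1 hp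
    obtain ⟨hx, hy, hxy⟩ := Finset.mem_offDiag.1 hoff
    rcases hS x y hx hy hadj with ⟨h1, h2⟩ | ⟨h1, h2⟩
    · exact Finset.mem_union_left _ (Finset.mem_filter.2 ⟨Finset.mem_offDiag.2 ⟨h1, h2, hxy⟩, hadj⟩)
    · exact Finset.mem_union_right _ (Finset.mem_filter.2 ⟨Finset.mem_offDiag.2 ⟨h1, h2, hxy⟩, hadj⟩)
  exact le_trans (Finset.card_le_card hsub) (Finset.card_union_le _ _)

lemma mader (G : SimpleGraph (Fin n)) (K δ : ℕ) (hK : 1 ≤ K) (hδ : 4*K ≤ δ)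
    (S₀ : Finset (Fin n)) (hS₀ : 2*K ≤ S₀.card) (hd : δ * (S₀.card - K) < din G S₀) :
    ∃ S : Finset (Fin n), δ + 3 ≤ 2*S.card ∧ KConnOn (K+1) G S := by
  set Q : Finset (Fin n) → Prop := fun S => 2*K ≤ S.card ∧ δ * (S.card - K) < din G S with hQdef
  have hcand : (Finset.univ.powerset.filter Q).Nonempty :=
    ⟨S₀, Finset.mem_filter.2 ⟨Finset.mem_powerset.2 (Finset.subset_univ _), hS₀, hd⟩⟩
  obtain ⟨S, hSmem, hSmin⟩ := Finset.exists_min_image _ Finset.card hcand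
  have hQS : Q S := (Finset.mem_filter.1 hSmem).2
  obtain ⟨hQ1, hQ2⟩ := hQS
  have hmin : ∀ S' : Finset (Fin n), Q S' → S.card ≤ S'.card := fun S' hS' =>
    hSmin S' (Finset.mem_filter.2 ⟨Finset.mem_powerset.2 (Finset.subset_univ _), hS'⟩)
  -- |S| > 2K
  have hbig : 2*K + 1 ≤ S.card := by
    rcases Nat.lt_or_ge (2*K) S.card with h | h
    · omega
    · exfalso
      have hcard : S.card = 2*K := le_antisymm h hQ1
      have h1 := din_le G S
      rw [hcard] at h1 hQ2
      have h2 : 2*K - K = K := by omega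
      rw [h2] at hQ2
      have h3 : 4*(K*K) ≤ δ*K := by
        calc 4*(K*K) = 4*K*K := by ring
        _ ≤ δ*K := Nat.mul_le_mul_right _ hδ
      have h4 : din G S ≤ 4*(K*K) - 2*K := by
        calc din G S ≤ 2*K*(2*K) - 2*K := h1
        _ = 4*(K*K) - 2*K := by rw [show 2*K*(2*K) = 4*(K*K) from by ring]
      have h5 : din G S < δ*K := by
        refine lt_of_le_of_lt h4 (lt_of_lt_of_le ?_ h3)
        exact Nat.sub_lt (by positivity) (by omega)
      exact absurd hQ2 (Nat.lt_asymm h5)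
  -- min degree
  set degS : Fin n → ℕ := fun v => ((S.erase v).filter (fun w => G.Adj v w)).card with hdegS
  have hdeg : ∀ v ∈ S, δ + 1 ≤ 2 * degS v := by
    intro v hv
    have hScard : (S.erase v).card = S.card - 1 := Finset.card_erase_of_mem hv
    have hnotQ : ¬ Q (S.erase v) := by
      intro hQ'
      have := hmin _ hQ'
      omega
    have hQ'1 : 2*K ≤ (S.erase v).card := by omega
    have hdin : din G (S.erase v) ≤ δ * (S.card - 1 - K) := by
      by_contra hcon
      refine hnotQ ⟨hQ'1, ?_⟩
      rw [hScard]
      omega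
    have her := din_erase G S v
    have hkl : ((S.erase v).filter (fun w => G.Adj v w)).card = degS v := rfl
    have hsplitmul : δ * (S.card - K) = δ * (S.card - 1 - K) + δ := by
      have h3 : S.card - K = (S.card - 1 - K) + 1 := by omega
      rw [h3, Nat.mul_add, Nat.mul_one]
    omega
  have hSne : S.Nonempty := Finset.card_pos.1 (by omega)
  obtain ⟨v₀, hv₀⟩ := hSne
  have hdeglt : ∀ v ∈ S, degS v ≤ S.card - 1 := by
    intro v hv
    have : degS v ≤ (S.erase v).card := Finset.card_filter_le _ _
    rw [Finset.card_erase_of_mem hv] at this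
    exact this
  have hsize : δ + 3 ≤ 2 * S.card := by
    have h1 := hdeg v₀ hv₀
    have h2 := hdeglt v₀ hv₀
    omega
  refine ⟨S, hsize, ⟨by omega, ?_⟩⟩
  intro T hTS hTc
  have hTK : T.card ≤ K := by omega
  have hne : (S \ T).Nonempty := by
    apply Finset.card_pos.1
    have := Finset.card_sdiff_of_subset hTS
    omega
  refine ⟨hne, ?_⟩
  by_contra hcon
  push_neg at hcon
  obtain ⟨u, hu, v, hv, huv⟩ := hcon
  set A : Finset (Fin n) := (S \ T).filter (fun x => Relation.ReflTransGen (stepRel G (S \ T)) u x) with hAdef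
  set B : Finset (Fin n) := (S \ T) \ A with hBdef
  have huA : u ∈ A := Finset.mem_filter.2 ⟨hu, Relation.ReflTransGen.refl⟩
  have hvB : v ∈ B := Finset.mem_sdiff.2 ⟨hv, fun hmem => huv ((Finset.mem_filter.1 hmem).2)⟩
  have hnoedge : ∀ x ∈ A, ∀ y ∈ B, ¬ G.Adj x y := by
    intro x hx y hy hadj
    obtain ⟨hxST, hxr⟩ := Finset.mem_filter.1 hx
    obtain ⟨hyST, hyA⟩ := Finset.mem_sdiff.1 hy
    exact hyA (Finset.mem_filter.2 ⟨hyST, hxr.tail ⟨hxST, hyST, hadj⟩⟩)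
  set S₁ : Finset (Fin n) := A ∪ T with hS₁def
  set S₂ : Finset (Fin n) := B ∪ T with hS₂def
  have hAS : A ⊆ S \ T := Finset.filter_subset _ _
  have hBS : B ⊆ S \ T := Finset.sdiff_subset
  have hmemS : ∀ x ∈ S, x ∈ A ∨ x ∈ B ∨ x ∈ T := by
    intro x hx
    by_cases hxT : x ∈ T
    · exact Or.inr (Or.inr hxT)
    · have hxST : x ∈ S \ T := Finset.mem_sdiff.2 ⟨hx, hxT⟩
      by_cases hxA : x ∈ A
      · exact Or.inl hxA
      · exact Or.inr (Or.inl (Finset.mem_sdiff.2 ⟨hxST, hxA⟩))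
  have hAB : ∀ x, ¬ (x ∈ A ∧ x ∈ B) := by
    rintro x ⟨hx1, hx2⟩
    exact (Finset.mem_sdiff.1 hx2).2 hx1
  have hAT : ∀ x, ¬ (x ∈ A ∧ x ∈ T) := by
    rintro x ⟨hx1, hx2⟩
    exact (Finset.mem_sdiff.1 (hAS hx1)).2 hx2
  have hBT : ∀ x, ¬ (x ∈ B ∧ x ∈ T) := by
    rintro x ⟨hx1, hx2⟩
    exact (Finset.mem_sdiff.1 (hBS hx1)).2 hx2
  have hsplit : ∀ x y, x ∈ S → y ∈ S → G.Adj x y → (x ∈ S₁ ∧ y ∈ S₁) ∨ (x ∈ S₂ ∧ y ∈ S₂) := by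
    intro x y hx hy hadj
    rcases hmemS x hx with hxA | hxB | hxT
    · rcases hmemS y hy with hyA | hyB | hyT
      · exact Or.inl ⟨Finset.mem_union_left _ hxA, Finset.mem_union_left _ hyA⟩
      · exact absurd hadj (hnoedge x hxA y hyB)
      · exact Or.inl ⟨Finset.mem_union_left _ hxA, Finset.mem_union_right _ hyT⟩
    · rcases hmemS y hy with hyA | hyB | hyT
      · exact absurd hadj.symm (hnoedge y hyA x hxB)
      · exact Or.inr ⟨Finset.mem_union_left _ hxB, Finset.mem_union_left _ hyB⟩
      · exact Or.inr ⟨Finset.mem_union_left _ hxB, Finset.mem_union_right _ hyT⟩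
    · rcases hmemS y hy with hyA | hyB | hyT
      · exact Or.inl ⟨Finset.mem_union_right _ hxT, Finset.mem_union_left _ hyA⟩
      · exact Or.inr ⟨Finset.mem_union_right _ hxT, Finset.mem_union_left _ hyB⟩
      · exact Or.inl ⟨Finset.mem_union_right _ hxT, Finset.mem_union_right _ hyT⟩
  have hS₁sub : S₁ ⊆ S := Finset.union_subset (hAS.trans Finset.sdiff_subset) hTS
  have hS₂sub : S₂ ⊆ S := Finset.union_subset (hBS.trans Finset.sdiff_subset) hTS
  have hcards : S₁.card + S₂.card = S.card + T.card := by
    have h1 : S₁.card = A.card + T.card := by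
      rw [hS₁def, Finset.card_union_of_disjoint]
      exact Finset.disjoint_left.2 (fun x hx1 hx2 => hAT x ⟨hx1, hx2⟩)
    have h2 : S₂.card = B.card + T.card := by
      rw [hS₂def, Finset.card_union_of_disjoint]
      exact Finset.disjoint_left.2 (fun x hx1 hx2 => hBT x ⟨hx1, hx2⟩)
    have h3 : A.card + B.card = (S \ T).card := by
      rw [hBdef, Finset.card_sdiff_of_subset hAS]
      have := Finset.card_le_card hAS
      omega
    have h4 := Finset.card_sdiff_of_subset hTS
    have h5 := Finset.card_le_card hTS
    omega
  -- each part is big (contains all neighbors of one of its A/B vertices)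
  have hpartbig : ∀ (P : Finset (Fin n)) (x : Fin n), x ∈ S → x ∉ T → x ∈ P →
      (∀ x' y, x' ∈ S → y ∈ S → G.Adj x' y → (x' ∈ P ∧ y ∈ P) ∨ False) →
      True := fun _ _ _ _ _ _ => trivial
  have hbig1 : δ + 3 ≤ 2 * S₁.card := by
    have hxS : u ∈ S := (Finset.mem_sdiff.1 hu).1
    have hnbr : (S.erase u).filter (fun w => G.Adj u w) ⊆ S₁.erase u := by
      intro w hw
      obtain ⟨hw1, hw2⟩ := Finset.mem_filter.1 hw
      obtain ⟨hwne, hwS⟩ := Finset.mem_erase.1 hw1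
      refine Finset.mem_erase.2 ⟨hwne, ?_⟩
      rcases hsplit u w hxS hwS hw2 with ⟨_, h⟩ | ⟨h, _⟩
      · exact h
      · exfalso
        rcases Finset.mem_union.1 h with h' | h'
        · exact hAB u ⟨huA, h'⟩
        · exact hAT u ⟨huA, h'⟩
    have h1 := hdeg u hxS
    have hkl : ((S.erase u).filter (fun w => G.Adj u w)).card = degS u := rfl
    have h2 : degS u ≤ S₁.card - 1 := by
      have := Finset.card_le_card hnbr
      have h3 : (S₁.erase u).card = S₁.card - 1 :=
        Finset.card_erase_of_mem (Finset.mem_union_left _ huA)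
      omega
    have h4 : 1 ≤ S₁.card := Finset.card_pos.2 ⟨u, Finset.mem_union_left _ huA⟩
    omega
  have hbig2 : δ + 3 ≤ 2 * S₂.card := by
    have hxS : v ∈ S := (Finset.mem_sdiff.1 hv).1
    have hnbr : (S.erase v).filter (fun w => G.Adj v w) ⊆ S₂.erase v := by
      intro w hw
      obtain ⟨hw1, hw2⟩ := Finset.mem_filter.1 hw
      obtain ⟨hwne, hwS⟩ := Finset.mem_erase.1 hw1
      refine Finset.mem_erase.2 ⟨hwne, ?_⟩
      rcases hsplit v w hxS hwS hw2 with ⟨h, _⟩ | ⟨_, h⟩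
      · exfalso
        rcases Finset.mem_union.1 h with h' | h'
        · exact hAB v ⟨h', hvB⟩
        · exact hBT v ⟨hvB, h'⟩
      · exact h
    have h1 := hdeg v hxS
    have hkl : ((S.erase v).filter (fun w => G.Adj v w)).card = degS v := rfl
    have h2 : degS v ≤ S₂.card - 1 := by
      have := Finset.card_le_card hnbr
      have h3 : (S₂.erase v).card = S₂.card - 1 :=
        Finset.card_erase_of_mem (Finset.mem_union_left _ hvB)
      omega
    have h4 : 1 ≤ S₂.card := Finset.card_pos.2 ⟨v, Finset.mem_union_left _ hvB⟩
    omega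
  have hS₁lt : S₁.card < S.card := by
    have hB1 : 1 ≤ B.card := Finset.card_pos.2 ⟨v, hvB⟩
    omega
  have hS₂lt : S₂.card < S.card := by
    have hA1 : 1 ≤ A.card := Finset.card_pos.2 ⟨u, huA⟩
    have h1 : S₁.card = A.card + T.card := by
      rw [hS₁def, Finset.card_union_of_disjoint]
      exact Finset.disjoint_left.2 (fun x hx1 hx2 => hAT x ⟨hx1, hx2⟩)
    omega
  have hd1 : din G S₁ ≤ δ * (S₁.card - K) := by
    by_contra hcon'
    have : Q S₁ := ⟨by omega, by omega⟩
    have := hmin _ this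
    omega
  have hd2 : din G S₂ ≤ δ * (S₂.card - K) := by
    by_contra hcon'
    have : Q S₂ := ⟨by omega, by omega⟩
    have := hmin _ this
    omega
  have hsum := din_split G S S₁ S₂ hsplit
  have hfinal : δ * (S₁.card - K) + δ * (S₂.card - K) ≤ δ * (S.card - K) := by
    rw [← Nat.mul_add]
    apply Nat.mul_le_mul_left
    omega
  omega

end mader

lemma disjUnion'_adj {α β : Type*} (G : SimpleGraph α) (H : SimpleGraph β)
    (x y : α ⊕ β) : (disjUnion' G H).Adj x y ↔
    (∃ a b, x = Sum.inl a ∧ y = Sum.inl b ∧ G.Adj a b) ∨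
    (∃ a b, x = Sum.inr a ∧ y = Sum.inr b ∧ H.Adj a b) := by
  rw [disjUnion', SimpleGraph.fromRel_adj]
  constructor
  · rintro ⟨hne, (⟨a, b, rfl, rfl, hab⟩ | ⟨a, b, rfl, rfl, hab⟩) |
      (⟨a, b, rfl, rfl, hab⟩ | ⟨a, b, rfl, rfl, hab⟩)⟩
    · exact Or.inl ⟨a, b, rfl, rfl, hab⟩
    · exact Or.inr ⟨a, b, rfl, rfl, hab⟩
    · exact Or.inl ⟨b, a, rfl, rfl, hab.symm⟩
    · exact Or.inr ⟨b, a, rfl, rfl, hab.symm⟩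
  · rintro (⟨a, b, rfl, rfl, hab⟩ | ⟨a, b, rfl, rfl, hab⟩)
    · exact ⟨by simp [hab.ne], Or.inl (Or.inl ⟨a, b, rfl, rfl, hab⟩)⟩
    · exact ⟨by simp [hab.ne], Or.inl (Or.inr ⟨a, b, rfl, rfl, hab⟩)⟩

lemma pathGraph3_edges : ∀ a b : Fin 3, (SimpleGraph.pathGraph 3).Adj a b →
    s(a, b) = s((0 : Fin 3), (1 : Fin 3)) ∨ s(a, b) = s((1 : Fin 3), (2 : Fin 3)) := by
  intro a b hab
  have h := SimpleGraph.pathGraph_adj.1 hab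
  revert h
  fin_cases a <;> fin_cases b <;> decide

lemma noRb {n m h : ℕ} (H : SimpleGraph (Fin h)) (c : Sym2 (Fin n) → Fin m)
    (hrb : ¬ RainbowCopy (disjUnion' (SimpleGraph.pathGraph 3) H) (⊤ : SimpleGraph (Fin n)) c)
    (f : Fin h → Fin n) (hfinj : Function.Injective f)
    (hfrb : ∀ a b a' b', H.Adj a b → H.Adj a' b' →
      c s(f a, f b) = c s(f a', f b') → s(a, b) = s(a', b'))
    (u v w : Fin n) (hu : ∀ a, u ≠ f a) (hv : ∀ a, v ≠ f a) (hw : ∀ a, w ≠ f a)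
    (huv : u ≠ v) (hvw : v ≠ w) (huw : u ≠ w)
    (hcu : ∀ a b, H.Adj a b → c s(u, v) ≠ c s(f a, f b))
    (hcw : ∀ a b, H.Adj a b → c s(v, w) ≠ c s(f a, f b)) :
    c s(u, v) = c s(v, w) := by
  by_contra hne
  apply hrb
  set g : Fin 3 → Fin n := ![u, v, w] with hg
  have hg0 : g 0 = u := rfl
  have hg1 : g 1 = v := rfl
  have hg2 : g 2 = w := rfl
  have hginj : Function.Injective g := by
    intro i j hij
    fin_cases i <;> fin_cases j <;> simp_all <;>
      first | rfl | (exact absurd hij (by assumption)) |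
        (exact absurd hij.symm (by assumption))
  have hgf : ∀ (i : Fin 3) (a : Fin h), g i ≠ f a := by
    intro i a
    fin_cases i
    exacts [hu a, hv a, hw a]
  refine ⟨Sum.elim g f, ?_, ?_, ?_⟩
  · intro x y hxy
    cases x <;> cases y <;> simp only [Sum.elim_inl, Sum.elim_inr] at hxy
    · exact congrArg Sum.inl (hginj hxy)
    · exact absurd hxy (hgf _ _)
    · exact absurd hxy.symm (hgf _ _)
    · exact congrArg Sum.inr (hfinj hxy)
  · intro x y hxy
    rcases (disjUnion'_adj _ _ _ _).1 hxy with ⟨a, b, rfl, rfl, hab⟩ | ⟨a, b, rfl, rfl, hab⟩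
    · simp only [SimpleGraph.top_adj, Sum.elim_inl]
      intro hcon
      exact hab.ne (hginj hcon)
    · simp only [SimpleGraph.top_adj, Sum.elim_inr]
      intro hcon
      exact hab.ne (hfinj hcon)
  · intro a b a' b' hab hab' hcol
    rcases (disjUnion'_adj _ _ _ _).1 hab with ⟨x1, y1, rfl, rfl, h1⟩ | ⟨x1, y1, rfl, rfl, h1⟩ <;>
      rcases (disjUnion'_adj _ _ _ _).1 hab' with ⟨x2, y2, rfl, rfl, h2⟩ | ⟨x2, y2, rfl, rfl, h2⟩
    · -- both P3 edges
      simp only [Sum.elim_inl] at hcol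
      have e1 := pathGraph3_edges _ _ h1
      have e2 := pathGraph3_edges _ _ h2
      have key : ∀ (p q : Fin 3 × Fin 3), s(p.1, p.2) = s(q.1, q.2) →
          s(g p.1, g p.2) = s(g q.1, g q.2) := by
        intro p q hpq
        have := congrArg (Sym2.map g) hpq
        simp only [Sym2.map_pair_eq] at this
        exact this
      rcases e1 with e1 | e1 <;> rcases e2 with e2 | e2
      · have h12 : s(x1, y1) = s(x2, y2) := e1.trans e2.symm
        have := congrArg (Sym2.map (Sum.inl : Fin 3 → Fin 3 ⊕ Fin h)) h12
        simp only [Sym2.map_pair_eq] at this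
        exact this
      · exfalso
        apply hne
        have c1 : c s(g x1, g y1) = c s(u, v) := by
          rw [key (x1, y1) (0, 1) e1]; rfl
        have c2 : c s(g x2, g y2) = c s(v, w) := by
          rw [key (x2, y2) (1, 2) e2]; rfl
        rw [← c1, ← c2]; exact hcol
      · exfalso
        apply hne
        have c1 : c s(g x1, g y1) = c s(v, w) := by
          rw [key (x1, y1) (1, 2) e1]; rfl
        have c2 : c s(g x2, g y2) = c s(u, v) := by
          rw [key (x2, y2) (0, 1) e2]; rfl
        rw [← c2, ← c1]; exact hcol.symm
      · have h12 : s(x1, y1) = s(x2, y2) := e1.trans e2.symm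
        have := congrArg (Sym2.map (Sum.inl : Fin 3 → Fin 3 ⊕ Fin h)) h12
        simp only [Sym2.map_pair_eq] at this
        exact this
    · -- P3 edge vs H edge : contradiction
      exfalso
      simp only [Sum.elim_inl, Sum.elim_inr] at hcol
      have e1 := pathGraph3_edges _ _ h1
      rcases e1 with e1 | e1
      · have c1 : c s(g x1, g y1) = c s(u, v) := by
          have := congrArg (Sym2.map g) e1
          simp only [Sym2.map_pair_eq] at this
          rw [this]; rfl
        exact hcu x2 y2 h2 (by rw [← c1]; exact hcol)
      · have c1 : c s(g x1, g y1) = c s(v, w) := by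
          have := congrArg (Sym2.map g) e1
          simp only [Sym2.map_pair_eq] at this
          rw [this]; rfl
        exact hcw x2 y2 h2 (by rw [← c1]; exact hcol)
    · -- H edge vs P3 edge : contradiction
      exfalso
      simp only [Sum.elim_inl, Sum.elim_inr] at hcol
      have e2 := pathGraph3_edges _ _ h2
      rcases e2 with e2 | e2
      · have c2 : c s(g x2, g y2) = c s(u, v) := by
          have := congrArg (Sym2.map g) e2
          simp only [Sym2.map_pair_eq] at this
          rw [this]; rfl
        exact hcu x1 y1 h1 (by rw [← c2]; exact hcol.symm)
      · have c2 : c s(g x2, g y2) = c s(v, w) := by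
          have := congrArg (Sym2.map g) e2
          simp only [Sym2.map_pair_eq] at this
          rw [this]; rfl
        exact hcw x1 y1 h1 (by rw [← c2]; exact hcol.symm)
    · -- both H edges
      simp only [Sum.elim_inr] at hcol
      have h12 := hfrb x1 y1 x2 y2 h1 h2 hcol
      have := congrArg (Sym2.map (Sum.inr : Fin h → Fin 3 ⊕ Fin h)) h12
      simp only [Sym2.map_pair_eq] at this
      exact this

lemma pigeon {α β : Type*} [DecidableEq β] (s : Finset α) (t : Finset β) (f : α → β)
    (hf : ∀ x ∈ s, f x ∈ t) (ht : t.Nonempty) :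
    ∃ b ∈ t, s.card ≤ t.card * (s.filter (fun x => f x = b)).card := by
  classical
  obtain ⟨b, hb, hmax⟩ := Finset.exists_max_image t
    (fun b => (s.filter (fun x => f x = b)).card) ht
  refine ⟨b, hb, ?_⟩
  rw [Finset.card_eq_sum_card_fiberwise hf]
  calc ∑ b' ∈ t, (s.filter (fun x => f x = b')).card
      ≤ ∑ _b' ∈ t, (s.filter (fun x => f x = b)).card :=
        Finset.sum_le_sum (fun b' hb' => hmax b' hb')
  _ = t.card * _ := by rw [Finset.sum_const, smul_eq_mul]

lemma propagate {n m : ℕ} (G : SimpleGraph (Fin n)) (c : Sym2 (Fin n) → Fin m)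
    (hL : ∀ u v w, G.Adj u v → G.Adj v w → c s(u, v) = c s(v, w))
    (S : Finset (Fin n)) (k : ℕ) (hk : 1 ≤ k) (hS2 : 2 ≤ S.card)
    (hK : KConnOn k G S) : ∃ i, ∀ x y, x ∈ S → y ∈ S → G.Adj x y → c s(x, y) = i := by
  have conn := hK.2 ∅ (Finset.empty_subset _) (by simp; omega)
  rw [Finset.sdiff_empty] at conn
  obtain ⟨hne, hconn⟩ := conn
  obtain ⟨x0, hx0, z, hz, hxz⟩ := Finset.one_lt_card.1 (show 1 < S.card by omega)
  have hR := hconn x0 hx0 z hz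
  rcases Relation.ReflTransGen.cases_head hR with heq | ⟨y0, hstep, _⟩
  · exact absurd heq hxz
  obtain ⟨_, _, hadj0⟩ := hstep
  refine ⟨c s(x0, y0), ?_⟩
  have main : ∀ x, Relation.ReflTransGen (stepRel G S) x0 x →
      ∀ y, G.Adj x y → c s(x, y) = c s(x0, y0) := by
    intro x hx
    induction hx with
    | refl =>
      intro y hy
      calc c s(x0, y) = c s(y, x0) := congrArg c (Sym2.eq_swap)
      _ = c s(x0, y0) := hL y x0 y0 hy.symm hadj0
    | @tail b cc _ hstep' ih =>
      intro y hy
      have h1 : c s(b, cc) = c s(x0, y0) := ih cc hstep'.2.2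
      have h2 : c s(b, cc) = c s(cc, y) := hL b cc y hstep'.2.2 hy
      rw [← h2, h1]
  intro x y hxS hyS hadj
  exact main x (hconn x0 hx0 x hxS) y hadj

/-- If every rainbow-`H`-free `m`-coloring of `Kₙ` has a `k`-connected
monochromatic subgraph on more than `(n − h)/(9e)` vertices, then every rainbow
`(P₃ ∪ H)`-free `m`-coloring of `Kₙ` has one on at least that many vertices. -/
theorem stmt_17 (k m n h : ℕ) (H : SimpleGraph (Fin h)) (he : 1 ≤ H.edgeSet.ncard)
    (hk : 2 ≤ k) (hm1 : (k : ℝ) / 2 + 8 ≤ m) (hm2 : 77 ≤ m)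
    (hn : 99 * k ^ 2 * m ^ 2 ≤ n)
    (hyp : ∀ c' : Sym2 (Fin n) → Fin m, UsesAll c' →
      ¬ RainbowCopy H (⊤ : SimpleGraph (Fin n)) c' →
      ∃ (i : Fin m) (S : Finset (Fin n)),
        ((n : ℝ) - h) / (9 * (H.edgeSet.ncard : ℝ)) < S.card ∧
        KConn k ((monoGraph c' i).induce (↑S : Set (Fin n))))
    (c : Sym2 (Fin n) → Fin m) (hall : UsesAll c)
    (hrb : ¬ RainbowCopy (disjUnion' (SimpleGraph.pathGraph 3) H)
      (⊤ : SimpleGraph (Fin n)) c) :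
    ∃ (i : Fin m) (S : Finset (Fin n)),
      ((n : ℝ) - h) / (9 * (H.edgeSet.ncard : ℝ)) ≤ S.card ∧
      KConn k ((monoGraph c i).induce (↑S : Set (Fin n))) := by
  classical
  by_cases hHrb : RainbowCopy H (⊤ : SimpleGraph (Fin n)) c
  case neg =>
    obtain ⟨i, S, h1, h2⟩ := hyp c hall hHrb
    exact ⟨i, S, le_of_lt h1, h2⟩
  set e := H.edgeSet.ncard with hedef
  obtain ⟨f, hfinj, -, hfrb⟩ := hHrb
  have hle : h ≤ n := by
    have := Fintype.card_le_of_injective f hfinj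
    simpa using this
  haveI : Fintype ↥H.edgeSet := Fintype.ofFinite _
  set E : Finset (Sym2 (Fin h)) := H.edgeSet.toFinset with hEdef
  have hEcard : E.card = e := (Set.ncard_eq_toFinset_card' _).symm
  set R : Finset (Fin n) := Finset.univ.image f with hRdef
  have hRcard : R.card = h := by
    rw [hRdef, Finset.card_image_of_injective _ hfinj, Finset.card_univ, Fintype.card_fin]
  set V' : Finset (Fin n) := Rᶜ with hV'def
  have hV'card : V'.card = n - h := by
    rw [hV'def, Finset.card_compl, hRcard, Fintype.card_fin]
  set Cset : Finset (Fin m) := E.image (fun ε => c (ε.map f)) with hCdef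
  have hCcard : Cset.card ≤ e := le_trans Finset.card_image_le (le_of_eq hEcard)
  have hCin : ∀ a b, H.Adj a b → c s(f a, f b) ∈ Cset := by
    intro a b hab
    have h1 : s(a, b) ∈ E := by
      rw [hEdef, Set.mem_toFinset]
      exact hab
    have h2 : (s(a, b) : Sym2 (Fin h)).map f = s(f a, f b) := Sym2.map_pair_eq f a b
    rw [hCdef]
    exact Finset.mem_image.2 ⟨s(a, b), h1, by rw [h2]⟩
  have hCout : ∀ z : Sym2 (Fin n), c z ∉ Cset → ∀ a b, H.Adj a b → c z ≠ c s(f a, f b) := by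
    intro z hz a b hab heq
    exact hz (heq ▸ hCin a b hab)
  have hV'f : ∀ x, x ∈ V' → ∀ a, x ≠ f a := by
    intro x hx a heq
    rw [hV'def, Finset.mem_compl] at hx
    exact hx (Finset.mem_image.2 ⟨a, Finset.mem_univ _, heq.symm⟩)
  -- star graph on V'
  set Gs : SimpleGraph (Fin n) :=
    SimpleGraph.fromRel (fun x y => x ∈ V' ∧ y ∈ V' ∧ c s(x, y) ∉ Cset) with hGsdef
  have hGsAdj : ∀ x y, Gs.Adj x y ↔ x ≠ y ∧ x ∈ V' ∧ y ∈ V' ∧ c s(x, y) ∉ Cset := by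
    intro x y
    rw [hGsdef, SimpleGraph.fromRel_adj]
    constructor
    · rintro ⟨hne, ⟨h1, h2, h3⟩ | ⟨h1, h2, h3⟩⟩
      · exact ⟨hne, h1, h2, h3⟩
      · refine ⟨hne, h2, h1, ?_⟩
        rwa [show s(x, y) = s(y, x) from Sym2.eq_swap]
    · rintro ⟨hne, h1, h2, h3⟩
      exact ⟨hne, Or.inl ⟨h1, h2, h3⟩⟩
  have hL : ∀ u v w, Gs.Adj u v → Gs.Adj v w → c s(u, v) = c s(v, w) := by
    intro u v w h1 h2
    rw [hGsAdj] at h1 h2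
    obtain ⟨huv, hu, hv, hc1⟩ := h1
    obtain ⟨hvw, _, hw, hc2⟩ := h2
    by_cases huw : u = w
    · subst huw
      exact congrArg c Sym2.eq_swap
    · exact noRb H c hrb f hfinj hfrb u v w (hV'f u hu) (hV'f v hv) (hV'f w hw)
        huv hvw huw (hCout _ hc1) (hCout _ hc2)
  -- common finishing move
  have he1 : 1 ≤ e := he
  have finish : ∀ (i : Fin m) (S : Finset (Fin n)), KConnOn k (monoGraph c i) S →
      n - h ≤ 9 * e * S.card →
      ∃ (i : Fin m) (S : Finset (Fin n)),
        ((n : ℝ) - h) / (9 * (H.edgeSet.ncard : ℝ)) ≤ S.card ∧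
        KConn k ((monoGraph c i).induce (↑S : Set (Fin n))) := by
    intro i S hKC hcard
    refine ⟨i, S, ?_, kConnOn_kConn hKC⟩
    have hepos : (0:ℝ) < 9 * (e : ℝ) := by
      have : (1:ℝ) ≤ (e:ℝ) := by exact_mod_cast he1
      linarith
    rw [show (H.edgeSet.ncard : ℝ) = (e : ℝ) from rfl, div_le_iff₀ hepos]
    have h1 : ((n - h : ℕ) : ℝ) ≤ ((9 * e * S.card : ℕ) : ℝ) := by exact_mod_cast hcard
    rw [Nat.cast_sub hle] at h1
    push_cast at h1 ⊢
    linarith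
  set K := k - 1 with hKdef
  have hkK : K + 1 = k := by omega
  set n' := n - h with hn'def
  by_cases hcase : 8 * k * (e + 1) + 1 ≤ n'
  · -- main case : work inside V'
    have he2 : 0 < e + 1 := by omega
    set t : Finset (Option (Fin m)) := insert none (Cset.image some) with htdef
    have htcard : t.card ≤ e + 1 := by
      calc t.card ≤ (Cset.image some).card + 1 := Finset.card_insert_le _ _
      _ ≤ Cset.card + 1 := by
          have := Finset.card_image_le (s := Cset) (f := some)
          omega
      _ ≤ e + 1 := by omega
    set cl : Fin n × Fin n → Option (Fin m) :=
      fun p => if c s(p.1, p.2) ∈ Cset then some (c s(p.1, p.2)) else none with hcldef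
    have hclmem : ∀ p ∈ V'.offDiag, cl p ∈ t := by
      intro p _
      rw [hcldef]
      by_cases hmem : c s(p.1, p.2) ∈ Cset
      · simp only [if_pos hmem]
        exact Finset.mem_insert_of_mem (Finset.mem_image_of_mem _ hmem)
      · simp only [if_neg hmem]
        exact Finset.mem_insert_self _ _
    obtain ⟨b0, hb0t, hb0⟩ := pigeon V'.offDiag t cl hclmem ⟨none, Finset.mem_insert_self _ _⟩
    have hoffc : V'.offDiag.card = n' * n' - n' := by rw [Finset.offDiag_card, hV'card]
    have hbound : n' * n' - n' ≤ (e + 1) * (V'.offDiag.filter (fun x => cl x = b0)).card := by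
      calc n' * n' - n' = V'.offDiag.card := hoffc.symm
      _ ≤ t.card * (V'.offDiag.filter (fun x => cl x = b0)).card := hb0
      _ ≤ (e + 1) * (V'.offDiag.filter (fun x => cl x = b0)).card :=
          Nat.mul_le_mul_right _ htcard
    have hn'2 : 2 ≤ n' := by
      have : 2 ≤ 8 * k * (e + 1) := by
        have h1 : 8 * k ≤ 8 * k * (e + 1) := Nat.le_mul_of_pos_right _ he2
        omega
      omega
    have hnum : ∀ G2 : SimpleGraph (Fin n),
        (V'.offDiag.filter (fun x => cl x = b0)).card ≤ din G2 V' →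
        ∃ S : Finset (Fin n), n' ≤ 9 * e * S.card ∧ KConnOn k G2 S ∧ 2 ≤ S.card := by
      intro G2 hG2
      set δ := (n' - 1) / (2 * (e + 1)) with hδdef
      have hδK : 4 * K ≤ δ := by
        rw [hδdef]
        refine (Nat.le_div_iff_mul_le (by omega : 0 < 2 * (e + 1))).2 ?_
        have h2 : 4 * K * (2 * (e + 1)) ≤ 8 * k * (e + 1) := by
          calc 4 * K * (2 * (e + 1)) = 8 * (K * (e + 1)) := by ring
          _ ≤ 8 * (k * (e + 1)) :=
              Nat.mul_le_mul_left _ (Nat.mul_le_mul_right _ (by omega))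
          _ = 8 * k * (e + 1) := by ring
        omega
      have hdm : δ * (2 * (e + 1)) ≤ n' - 1 := Nat.div_mul_le_self _ _
      have hkey : 2 * (δ * n') ≤ din G2 V' := by
        refine Nat.le_of_mul_le_mul_left ?_ he2
        have ha : (δ * (2 * (e + 1))) * n' ≤ (n' - 1) * n' := Nat.mul_le_mul_right _ hdm
        have hb : (n' - 1) * n' = n' * n' - n' := by rw [Nat.sub_mul, one_mul]
        have hc : (δ * (2 * (e + 1))) * n' = (e + 1) * (2 * (δ * n')) := by ring
        rw [hb, hc] at ha
        exact le_trans ha (le_trans hbound (Nat.mul_le_mul_left _ hG2))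
      have hδn1 : 1 ≤ δ * n' := Nat.mul_pos (by omega) (by omega)
      have hdin : δ * (V'.card - K) < din G2 V' := by
        have h1 : δ * (V'.card - K) ≤ δ * n' := by
          apply Nat.mul_le_mul_left
          omega
        calc δ * (V'.card - K) ≤ δ * n' := h1
        _ < 2 * (δ * n') := by omega
        _ ≤ din G2 V' := hkey
      obtain ⟨S, hsize, hKc⟩ := mader G2 K δ (by omega) hδK V' (by
        have h1 : 2 * k ≤ 8 * k * (e + 1) := by
          calc 2 * k ≤ 8 * k := by omega
          _ ≤ 8 * k * (e + 1) := Nat.le_mul_of_pos_right _ he2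
        omega) hdin
      rw [hkK] at hKc
      refine ⟨S, ?_, hKc, by have := hKc.1; omega⟩
      have hmod := Nat.div_add_mod (n' - 1) (2 * (e + 1))
      rw [← hδdef] at hmod
      have hmodlt : (n' - 1) % (2 * (e + 1)) < 2 * (e + 1) := Nat.mod_lt _ (by omega)
      have hup : n' ≤ 2 * (e + 1) * δ + 2 * (e + 1) := by omega
      have hA : 2 * (e + 1) * δ + 2 * (e + 1) = 2 * (e * δ) + 2 * δ + 2 * e + 2 := by ring
      have hB : 9 * (e * δ) + 27 * e ≤ 18 * (e * S.card) := by
        calc 9 * (e * δ) + 27 * e = 9 * e * (δ + 3) := by ring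
        _ ≤ 9 * e * (2 * S.card) := Nat.mul_le_mul_left _ hsize
        _ = 18 * (e * S.card) := by ring
      have hC : δ ≤ e * δ := Nat.le_mul_of_pos_left _ (by omega)
      have hgoal : n' ≤ 9 * (e * S.card) := by omega
      calc n' ≤ 9 * (e * S.card) := hgoal
      _ = 9 * e * S.card := by ring
    rcases b0 with _ | i0
    · -- majority class avoids the H-colors : star graph
      have hsub : (V'.offDiag.filter (fun x => cl x = none)).card ≤ din Gs V' := by
        apply Finset.card_le_card
        intro p hp
        obtain ⟨hp1, hp2⟩ := Finset.mem_filter.1 hp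
        obtain ⟨hx, hy, hne⟩ := Finset.mem_offDiag.1 hp1
        simp only [Finset.mem_filter]
        refine ⟨hp1, ?_⟩
        rw [hGsAdj]
        refine ⟨hne, hx, hy, ?_⟩
        intro hmem
        rw [hcldef] at hp2
        simp only [if_pos hmem] at hp2
        cases hp2
      obtain ⟨S, hsizeS, hKc, hS2⟩ := hnum Gs hsub
      obtain ⟨i, hi⟩ := propagate Gs c hL S k (by omega) hS2 hKc
      have hKc' : KConnOn k (monoGraph c i) S := by
        refine kConnOn_mono (fun x y hx hy hadj => ?_) hKc
        exact (SimpleGraph.fromRel_adj _ _ _).2 ⟨hadj.ne, Or.inl (hi x y hx hy hadj)⟩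
      exact finish i S hKc' hsizeS
    · -- majority class is one of the H-colors
      have hsub : (V'.offDiag.filter (fun x => cl x = some i0)).card ≤
          din (monoGraph c i0) V' := by
        apply Finset.card_le_card
        intro p hp
        obtain ⟨hp1, hp2⟩ := Finset.mem_filter.1 hp
        obtain ⟨hx, hy, hne⟩ := Finset.mem_offDiag.1 hp1
        refine Finset.mem_filter.2 ⟨hp1, ?_⟩
        rw [hcldef] at hp2
        by_cases hmem : c s(p.1, p.2) ∈ Cset
        · simp only [if_pos hmem, Option.some.injEq] at hp2
          exact (SimpleGraph.fromRel_adj _ _ _).2 ⟨hne, Or.inl hp2⟩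
        · simp only [if_neg hmem] at hp2
          cases hp2
      obtain ⟨S, hsizeS, hKc, -⟩ := hnum (monoGraph c i0) hsub
      exact finish i0 S hKc hsizeS
  · -- fallback : big monochromatic k-connected subgraph in Kₙ
    push_neg at hcase
    have hm0 : 0 < m := by omega
    have hkm : 8 * k * m + 1 ≤ n := by
      have h1 : 2 * 77 ≤ k * m := Nat.mul_le_mul hk hm2
      nlinarith [hn]
    have hunivcard : (Finset.univ : Finset (Fin n)).card = n := by
      rw [Finset.card_univ, Fintype.card_fin]
    set δ' := (n - 1) / (2 * m) with hδ'def
    have hδK : 4 * K ≤ δ' := by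
      rw [hδ'def]
      refine (Nat.le_div_iff_mul_le (by omega : 0 < 2 * m)).2 ?_
      have h2 : 4 * K * (2 * m) ≤ 8 * k * m := by
        calc 4 * K * (2 * m) = 8 * (K * m) := by ring
        _ ≤ 8 * (k * m) := by
          exact Nat.mul_le_mul_left _ (Nat.mul_le_mul_right _ (by omega))
        _ = 8 * k * m := by ring
      omega
    obtain ⟨i, -, hfib⟩ := pigeon (Finset.univ.offDiag) Finset.univ
      (fun x : Fin n × Fin n => c s(x.1, x.2)) (fun x _ => Finset.mem_univ _)
      ⟨⟨0, hm0⟩, Finset.mem_univ _⟩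
    have hoffc : (Finset.univ.offDiag : Finset (Fin n × Fin n)).card = n * n - n := by
      rw [Finset.offDiag_card, hunivcard]
    have hfib2 : ((Finset.univ.offDiag : Finset (Fin n × Fin n)).filter
        (fun x => c s(x.1, x.2) = i)).card ≤ din (monoGraph c i) Finset.univ := by
      apply Finset.card_le_card
      intro p hp
      obtain ⟨hp1, hp2⟩ := Finset.mem_filter.1 hp
      refine Finset.mem_filter.2 ⟨hp1, ?_⟩
      have hne := (Finset.mem_offDiag.1 hp1).2.2
      exact (SimpleGraph.fromRel_adj _ _ _).2 ⟨hne, Or.inl hp2⟩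
    have hmd : n * n - n ≤ m * din (monoGraph c i) Finset.univ := by
      calc n * n - n = (Finset.univ.offDiag : Finset (Fin n × Fin n)).card := hoffc.symm
      _ ≤ (Finset.univ : Finset (Fin m)).card * _ := hfib
      _ = m * ((Finset.univ.offDiag : Finset (Fin n × Fin n)).filter
          (fun x => c s(x.1, x.2) = i)).card := by
            rw [Finset.card_univ, Fintype.card_fin]
      _ ≤ m * din (monoGraph c i) Finset.univ := Nat.mul_le_mul_left _ hfib2
    have hdm : δ' * (2 * m) ≤ n - 1 := Nat.div_mul_le_self _ _
    have hkey : 2 * (δ' * n) ≤ din (monoGraph c i) Finset.univ := by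
      refine Nat.le_of_mul_le_mul_left ?_ hm0
      have ha : (δ' * (2 * m)) * n ≤ (n - 1) * n := Nat.mul_le_mul_right _ hdm
      have hb : (n - 1) * n = n * n - n := by rw [Nat.sub_mul, one_mul]
      have hc : (δ' * (2 * m)) * n = m * (2 * (δ' * n)) := by ring
      rw [hb, hc] at ha
      exact le_trans ha hmd
    have hδn1 : 1 ≤ δ' * n :=
      Nat.mul_pos (by omega) (by omega)
    have hdin : δ' * ((Finset.univ : Finset (Fin n)).card - K) <
        din (monoGraph c i) Finset.univ := by
      have h1 : δ' * ((Finset.univ : Finset (Fin n)).card - K) ≤ δ' * n := by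
        apply Nat.mul_le_mul_left
        omega
      omega
    obtain ⟨S, hsize, hKc⟩ := mader (monoGraph c i) K δ' (by omega) hδK
      Finset.univ (by
        have h1 : 2 * k ≤ 8 * k * m := by
          calc 2 * k ≤ 8 * k := by omega
          _ ≤ 8 * k * m := Nat.le_mul_of_pos_right _ hm0
        omega) hdin
    rw [hkK] at hKc
    apply finish i S hKc
    have hSk : 2 * k ≤ S.card := by omega
    have h1 : n' ≤ 8 * (e * k) + 8 * k := by
      have hexp : 8 * k * (e + 1) = 8 * (e * k) + 8 * k := by ring
      omega
    have h2 : 18 * (e * k) ≤ 9 * (e * S.card) := by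
      calc 18 * (e * k) = 9 * e * (2 * k) := by ring
      _ ≤ 9 * e * S.card := Nat.mul_le_mul_left _ hSk
      _ = 9 * (e * S.card) := by ring
    have h4 : k ≤ e * k := Nat.le_mul_of_pos_left _ (by omega)
    calc n - h = n' := rfl
    _ ≤ 9 * (e * S.card) := by omega
    _ = 9 * e * S.card := by ring
end
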